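/- arXiv:1311.2019 — 9 statements merged into one kernel-verified Lean document; each statement's English description precedes it below -/
import Mathlib

section
/- Let M ∈ ℤ^{n×n} be nonsingular. If the lattice graph 𝒢(M) is linearly symmetric, then for all i, j ∈ {1,…,n} the projection of 𝒢(M) over e_i is isomorphic (as a graph) to the projection of 𝒢(M) over e_j. -/
open Matrix

/-- The subgroup (submodule) `Mℤⁿ` generated by the columns of `M`. -/
def colSpan {ι : Type*} [Fintype ι] [DecidableEq ι] (M : Matrix ι ι ℤ) :
    Submodule ℤ (ι → ℤ) :=
  LinearMap.range M.mulVecLin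

/-- The vertex set `ℤⁿ/Mℤⁿ` of the lattice graph. -/
abbrev LatticeVertex {ι : Type*} [Fintype ι] [DecidableEq ι] (M : Matrix ι ι ℤ) :=
  (ι → ℤ) ⧸ colSpan M

/-- The `i`-th standard basis vector of `ℤⁿ`. -/
def stdBasis {ι : Type*} [DecidableEq ι] (i : ι) : ι → ℤ := Pi.single i 1

/-- The lattice graph `𝒢(M)`. -/
def latticeGraph {ι : Type*} [Fintype ι] [DecidableEq ι] (M : Matrix ι ι ℤ) :
    SimpleGraph (LatticeVertex M) where
  Adj v w := v ≠ w ∧ ∃ i : ι,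
      v - w = Submodule.Quotient.mk (stdBasis i) ∨
      w - v = Submodule.Quotient.mk (stdBasis i)
  symm := ⟨by rintro v w ⟨hne, i, h⟩; exact ⟨hne.symm, i, h.symm⟩⟩
  loopless := ⟨fun v h => h.1 rfl⟩

/-- The subgraph of `𝒢(M)` spanned by the directions in `S`. -/
def spannedSubgraph {ι : Type*} [Fintype ι] [DecidableEq ι] (M : Matrix ι ι ℤ) (S : Set ι) :
    SimpleGraph (AddSubgroup.closure
      ((fun i => (Submodule.Quotient.mk (stdBasis i) : LatticeVertex M)) '' S)) where
  Adj v w := v ≠ w ∧ ∃ i ∈ S,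
      (v : LatticeVertex M) - (w : LatticeVertex M) = Submodule.Quotient.mk (stdBasis i) ∨
      (w : LatticeVertex M) - (v : LatticeVertex M) = Submodule.Quotient.mk (stdBasis i)
  symm := ⟨by rintro v w ⟨hne, i, hiS, h⟩; exact ⟨hne.symm, i, hiS, h.symm⟩⟩
  loopless := ⟨fun v h => h.1 rfl⟩

/-- The projection of `𝒢(M)` over `e_j`: the subgraph spanned by all other directions. -/
def projGraph {ι : Type*} [Fintype ι] [DecidableEq ι] (M : Matrix ι ι ℤ) (j : ι) :=
  spannedSubgraph M {i | i ≠ j}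

/-- The torus graph `T(a₁,…,aₙ)`. -/
def torusGraph {n : ℕ} (a : Fin n → ℕ) : SimpleGraph (∀ i, ZMod (a i)) where
  Adj x y := x ≠ y ∧ ∃ i, (∀ j, j ≠ i → x j = y j) ∧ (x i = y i + 1 ∨ y i = x i + 1)
  symm := ⟨by
    rintro x y ⟨hne, i, hj, h⟩
    exact ⟨hne.symm, i, fun j hji => (hj j hji).symm, h.symm⟩⟩
  loopless := ⟨fun x h => h.1 rfl⟩

/-- A signed permutation matrix: exactly one nonzero entry, equal to `±1`,
in each row and each column. -/
def IsSignedPerm {n : ℕ} (P : Matrix (Fin n) (Fin n) ℤ) : Prop :=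
  (∀ i j, P i j = 0 ∨ P i j = 1 ∨ P i j = -1) ∧
  (∀ i, ∃! j, P i j ≠ 0) ∧ (∀ j, ∃! i, P i j ≠ 0)

/-- `𝒢(M)` is linearly symmetric: for every `i` there is a signed permutation matrix
inducing an automorphism of `𝒢(M)` sending `e₁` to `±e_i`. -/
def IsLinearlySymmetric {n : ℕ} (M : Matrix (Fin n) (Fin n) ℤ) : Prop :=
  ∀ i : Fin n, ∃ P : Matrix (Fin n) (Fin n) ℤ, IsSignedPerm P ∧
    (∃ Q : Matrix (Fin n) (Fin n) ℤ, P * M = M * Q) ∧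
    (P.mulVec (stdBasis (⟨0, i.pos⟩ : Fin n)) = stdBasis i ∨
      P.mulVec (stdBasis (⟨0, i.pos⟩ : Fin n)) = -stdBasis i)


section Aux

open Submodule

variable {n : ℕ}

/-- Extract the permutation/sign structure from a signed permutation matrix. -/
lemma signedPerm_struct {P : Matrix (Fin n) (Fin n) ℤ} (hP : IsSignedPerm P) :
    ∃ σ : Equiv.Perm (Fin n),
      (∀ k, P (σ k) k = 1 ∨ P (σ k) k = -1) ∧ (∀ k r, r ≠ σ k → P r k = 0) := by
  choose r hr hu using hP.2.2
  have hinj : Function.Injective r := by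
    intro k l hkl
    obtain ⟨c, -, hc⟩ := hP.2.1 (r k)
    have h1 : k = c := hc k (hr k)
    have h2 : l = c := hc l (by rw [hkl]; exact hr l)
    rw [h1, h2]
  refine ⟨Equiv.ofBijective r (Finite.injective_iff_bijective.mp hinj), ?_, ?_⟩
  · intro k
    rcases hP.1 (r k) k with h | h | h
    · exact absurd h (hr k)
    · exact Or.inl h
    · exact Or.inr h
  · intro k s hs
    by_contra h0
    exact hs (hu k s h0)

lemma descend_le (M A B : Matrix (Fin n) (Fin n) ℤ) (hAB : A * M = M * B) :
    colSpan M ≤ (colSpan M).comap A.mulVecLin := by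
  rintro x ⟨y, rfl⟩
  refine ⟨B.mulVec y, ?_⟩
  simp only [Matrix.mulVecLin_apply, Matrix.mulVec_mulVec, hAB]

lemma symm_gen (M : Matrix (Fin n) (Fin n) ℤ)
    (E : LatticeVertex M ≃+ LatticeVertex M) (σ : Equiv.Perm (Fin n))
    (h : ∀ k, E (Submodule.Quotient.mk (stdBasis k)) = Submodule.Quotient.mk (stdBasis (σ k)) ∨
         E (Submodule.Quotient.mk (stdBasis k)) = -Submodule.Quotient.mk (stdBasis (σ k))) :
    ∀ m, E.symm (Submodule.Quotient.mk (stdBasis m)) =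
        Submodule.Quotient.mk (stdBasis (σ.symm m)) ∨
      E.symm (Submodule.Quotient.mk (stdBasis m)) =
        -Submodule.Quotient.mk (stdBasis (σ.symm m)) := by
  intro m
  rcases h (σ.symm m) with h1 | h1 <;> rw [Equiv.apply_symm_apply] at h1
  · left; rw [← h1, AddEquiv.symm_apply_apply]
  · right
    have : E (-(Submodule.Quotient.mk (stdBasis (σ.symm m)))) =
        Submodule.Quotient.mk (stdBasis m) := by rw [map_neg, h1, neg_neg]
    rw [← this, AddEquiv.symm_apply_apply]

lemma memClos (M : Matrix (Fin n) (Fin n) ℤ)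
    (E : LatticeVertex M ≃+ LatticeVertex M) (σ : Equiv.Perm (Fin n)) (b i : Fin n)
    (hb : σ b = i)
    (h : ∀ k, E (Submodule.Quotient.mk (stdBasis k)) = Submodule.Quotient.mk (stdBasis (σ k)) ∨
         E (Submodule.Quotient.mk (stdBasis k)) = -Submodule.Quotient.mk (stdBasis (σ k))) :
    ∀ x ∈ AddSubgroup.closure
      ((fun k => (Submodule.Quotient.mk (stdBasis k) : LatticeVertex M)) '' {k | k ≠ b}),
      E x ∈ AddSubgroup.closure
      ((fun k => (Submodule.Quotient.mk (stdBasis k) : LatticeVertex M)) '' {k | k ≠ i}) := by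
  intro x hx
  refine AddSubgroup.closure_induction ?_ ?_ ?_ ?_ hx
  · rintro y ⟨k, hk, rfl⟩
    have hσk : σ k ≠ i := fun hh => hk (σ.injective (hh.trans hb.symm))
    have hmem : (Submodule.Quotient.mk (stdBasis (σ k)) : LatticeVertex M) ∈
        AddSubgroup.closure
        ((fun k => (Submodule.Quotient.mk (stdBasis k) : LatticeVertex M)) '' {k | k ≠ i}) :=
      AddSubgroup.subset_closure ⟨σ k, hσk, rfl⟩
    rcases h k with h1 | h1 <;> rw [h1]
    · exact hmem
    · exact neg_mem hmem
  · rw [map_zero]; exact zero_mem _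
  · intro x y _ _ h1 h2; rw [map_add]; exact add_mem h1 h2
  · intro x _ h1; rw [map_neg]; exact neg_mem h1

lemma adj_fwd (M : Matrix (Fin n) (Fin n) ℤ)
    (E : LatticeVertex M ≃+ LatticeVertex M) (σ : Equiv.Perm (Fin n)) (b i : Fin n)
    (hb : σ b = i)
    (h : ∀ k, E (Submodule.Quotient.mk (stdBasis k)) = Submodule.Quotient.mk (stdBasis (σ k)) ∨
         E (Submodule.Quotient.mk (stdBasis k)) = -Submodule.Quotient.mk (stdBasis (σ k)))
    (v w : LatticeVertex M)
    (hvw : ∃ k, k ≠ b ∧ (v - w = Submodule.Quotient.mk (stdBasis k) ∨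
        w - v = Submodule.Quotient.mk (stdBasis k))) :
    ∃ m, m ≠ i ∧ (E v - E w = Submodule.Quotient.mk (stdBasis m) ∨
        E w - E v = Submodule.Quotient.mk (stdBasis m)) := by
  obtain ⟨k, hk, hd⟩ := hvw
  refine ⟨σ k, fun hh => hk (σ.injective (hh.trans hb.symm)), ?_⟩
  have hsub : E v - E w = E (v - w) := by rw [map_sub]
  have hsub' : E w - E v = E (w - v) := by rw [map_sub]
  rcases hd with hd | hd <;> rcases h k with h1 | h1
  · left; rw [hsub, hd, h1]
  · right; rw [hsub', ← neg_sub v w, map_neg, hd, h1, neg_neg]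
  · right; rw [hsub', hd, h1]
  · left; rw [hsub, ← neg_sub w v, map_neg, hd, h1, neg_neg]

lemma key_iso (M : Matrix (Fin n) (Fin n) ℤ)
    (E : LatticeVertex M ≃+ LatticeVertex M) (σ : Equiv.Perm (Fin n)) (b i : Fin n)
    (hb : σ b = i)
    (h : ∀ k, E (Submodule.Quotient.mk (stdBasis k)) = Submodule.Quotient.mk (stdBasis (σ k)) ∨
         E (Submodule.Quotient.mk (stdBasis k)) = -Submodule.Quotient.mk (stdBasis (σ k))) :
    Nonempty (projGraph M b ≃g projGraph M i) := by
  have h' := symm_gen M E σ h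
  have hb' : σ.symm i = b := by rw [← hb, Equiv.symm_apply_apply]
  refine ⟨⟨⟨fun x => ⟨E x, memClos M E σ b i hb h x x.2⟩,
      fun y => ⟨E.symm y, memClos M E.symm σ.symm i b hb' h' y y.2⟩,
      fun x => Subtype.ext (E.symm_apply_apply x),
      fun y => Subtype.ext (E.apply_symm_apply y)⟩, ?_⟩⟩
  intro v w
  dsimp only [projGraph, spannedSubgraph]
  constructor
  · rintro ⟨hne, hex⟩
    refine ⟨fun hvw => hne (by rw [hvw]), ?_⟩
    have := adj_fwd M E.symm σ.symm i b hb' h' (E v) (E w)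
      (by simpa using hex)
    simpa using this
  · rintro ⟨hne, hex⟩
    refine ⟨fun hvw => hne (Subtype.ext (E.injective (Subtype.ext_iff.mp hvw))), ?_⟩
    have := adj_fwd M E σ b i hb h v w (by simpa using hex)
    simpa using this

lemma proj_iso_of_signedPerm (M : Matrix (Fin n) (Fin n) ℤ) (hM : M.det ≠ 0)
    (P Q : Matrix (Fin n) (Fin n) ℤ) (hsp : IsSignedPerm P) (hPQ : P * M = M * Q)
    (b i : Fin n)
    (hPe : P.mulVec (stdBasis b) = stdBasis i ∨ P.mulVec (stdBasis b) = -stdBasis i) :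
    Nonempty (projGraph M b ≃g projGraph M i) := by
  obtain ⟨σ, hsgn, hzero⟩ := signedPerm_struct hsp
  -- column formula
  have hcol : ∀ k, P.mulVec (stdBasis k) = Pi.single (σ k) (P (σ k) k) := by
    intro k
    rw [show _root_.stdBasis k = Pi.single k (1:ℤ) from rfl, Matrix.mulVec_single]
    funext s
    by_cases hs : s = σ k
    · subst hs; simp
    · simp [hzero k s hs, Pi.single_eq_of_ne hs]
  -- Pᵀ * P = 1
  have hPtP : Pᵀ * P = 1 := by
    ext k l
    rw [Matrix.mul_apply]
    rw [Finset.sum_eq_single (σ k)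
      (fun s _ hs => by rw [Matrix.transpose_apply, hzero k s hs, zero_mul])
      (fun hs => absurd (Finset.mem_univ _) hs)]
    rw [Matrix.transpose_apply]
    by_cases hkl : k = l
    · subst hkl
      rcases hsgn k with h1 | h1 <;> rw [h1] <;> simp
    · have : σ k ≠ σ l := fun hh => hkl (σ.injective hh)
      rw [hzero l (σ k) this, mul_zero, Matrix.one_apply_ne hkl]
  have hPP : P * Pᵀ = 1 := mul_eq_one_comm.mp hPtP
  -- Q is unimodular
  have hdetP : P.det * P.det = 1 := by
    have h1 := congrArg Matrix.det hPtP
    rwa [Matrix.det_mul, Matrix.det_transpose, Matrix.det_one] at h1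
  have hdetQ : Q.det = P.det := by
    have h1 := congrArg Matrix.det hPQ
    rw [Matrix.det_mul, Matrix.det_mul, mul_comm P.det M.det] at h1
    exact (mul_left_cancel₀ hM h1.symm)
  have hQunit : IsUnit Q := (Matrix.isUnit_iff_isUnit_det Q).mpr
    (IsUnit.of_mul_eq_one _ (by rw [hdetQ]; exact hdetP))
  obtain ⟨u, hu⟩ := hQunit
  set Q' : Matrix (Fin n) (Fin n) ℤ := ↑u⁻¹ with hQ'def
  have hQQ' : Q * Q' = 1 := by rw [← hu]; exact u.mul_inv
  have hPtM : Pᵀ * M = M * Q' := by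
    calc Pᵀ * M = Pᵀ * M * (Q * Q') := by rw [hQQ', mul_one]
      _ = Pᵀ * (M * Q) * Q' := by rw [← mul_assoc, mul_assoc Pᵀ M Q]
      _ = Pᵀ * (P * M) * Q' := by rw [hPQ]
      _ = (Pᵀ * P) * M * Q' := by rw [mul_assoc Pᵀ P M]
      _ = M * Q' := by rw [hPtP, one_mul]
  -- the induced equivalence on the quotient
  let f := (colSpan M).mapQ (colSpan M) P.mulVecLin (descend_le M P Q hPQ)
  let g := (colSpan M).mapQ (colSpan M) Pᵀ.mulVecLin (descend_le M Pᵀ Q' hPtM)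
  have hfg : f.comp g = LinearMap.id := by
    apply Submodule.linearMap_qext
    ext x
    simp only [f, g, LinearMap.comp_apply, Submodule.mkQ_apply, Submodule.mapQ_apply,
      Matrix.mulVecLin_apply, Matrix.mulVec_mulVec, hPP, Matrix.one_mulVec, LinearMap.id_apply]
  have hgf : g.comp f = LinearMap.id := by
    apply Submodule.linearMap_qext
    ext x
    simp only [f, g, LinearMap.comp_apply, Submodule.mkQ_apply, Submodule.mapQ_apply,
      Matrix.mulVecLin_apply, Matrix.mulVec_mulVec, hPtP, Matrix.one_mulVec, LinearMap.id_apply]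
  let E : LatticeVertex M ≃+ LatticeVertex M :=
    (LinearEquiv.ofLinear f g hfg hgf).toAddEquiv
  have hEmk : ∀ x : Fin n → ℤ, E (Submodule.Quotient.mk x) =
      Submodule.Quotient.mk (P.mulVec x) := fun x => by
    show f (Submodule.Quotient.mk x) = _
    rw [Submodule.mapQ_apply, Matrix.mulVecLin_apply]
  have hgen : ∀ k, E (Submodule.Quotient.mk (stdBasis k)) =
      Submodule.Quotient.mk (stdBasis (σ k)) ∨
      E (Submodule.Quotient.mk (stdBasis k)) = -Submodule.Quotient.mk (stdBasis (σ k)) := by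
    intro k
    rw [hEmk, hcol k]
    rcases hsgn k with h1 | h1 <;> rw [h1]
    · left; rfl
    · right; rw [Pi.single_neg, Submodule.Quotient.mk_neg]; rfl
  have hb : σ b = i := by
    have hε : P (σ b) b ≠ 0 := by rcases hsgn b with h1 | h1 <;> rw [h1] <;> norm_num
    by_contra hne
    rcases hPe with h1 | h1 <;> rw [hcol b] at h1
    · have h2 := congrFun h1 (σ b)
      rw [Pi.single_eq_same] at h2
      have h3 : _root_.stdBasis i (σ b) = 0 := Pi.single_eq_of_ne hne 1
      exact hε (h2.trans h3)
    · have h2 := congrFun h1 (σ b)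
      rw [Pi.single_eq_same] at h2
      have h3 : (-_root_.stdBasis i) (σ b) = 0 := by
        rw [Pi.neg_apply, show _root_.stdBasis i (σ b) = 0 from Pi.single_eq_of_ne hne 1, neg_zero]
      exact hε (h2.trans h3)
  exact key_iso M E σ b i hb hgen

end Aux

/-- all projections of a linearly symmetric lattice graph are isomorphic. -/
theorem projections_isomorphic_of_linearlySymmetric {n : ℕ}
    (M : Matrix (Fin n) (Fin n) ℤ) (hM : M.det ≠ 0)
    (hsym : IsLinearlySymmetric M) (i j : Fin n) :
    Nonempty (projGraph M i ≃g projGraph M j) := by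
  obtain ⟨Pa, hPa, ⟨Qa, hQa⟩, hea⟩ := hsym i
  obtain ⟨Pb, hPb, ⟨Qb, hQb⟩, heb⟩ := hsym j
  obtain ⟨ea⟩ := proj_iso_of_signedPerm M hM Pa Qa hPa hQa ⟨0, i.pos⟩ i hea
  obtain ⟨eb⟩ := proj_iso_of_signedPerm M hM Pb Qb hPb hQb ⟨0, j.pos⟩ j heb
  exact ⟨ea.symm.trans eb⟩
end

section
/- Let M ∈ ℤ^{3×3} be nonsingular. If the lattice graph 𝒢(M) is linearly symmetric, then there exist integers a, b, c such that 𝒢(M) is isomorphic to the lattice graph of a nonsingular matrix M′ which is either the circulant matrix with rows (a,c,b),(b,a,c),(c,b,a) or the matrix with rows (a,b,c),(a,c,−b−c),(a,−b−c,b). -/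
open Matrix

namespace LS3

abbrev V3 := Fin 3 → ℤ

def cyc (x : V3) : V3 := ![x 2, x 0, x 1]

def sm (x : V3) : ℤ := x 0 + x 1 + x 2

/-- plane embedding -/
def pl (a b : ℤ) : V3 := ![a, b - a, -b]

lemma cyc_add (x y : V3) : cyc (x + y) = cyc x + cyc y := by
  funext i; fin_cases i <;> simp [cyc]

lemma cyc_smul (k : ℤ) (x : V3) : cyc (k • x) = k • cyc x := by
  funext i; fin_cases i <;> simp [cyc]

lemma cyc_sub (x y : V3) : cyc (x - y) = cyc x - cyc y := by
  funext i; fin_cases i <;> simp [cyc]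

lemma sm_cyc (x : V3) : sm (cyc x) = sm x := by simp [cyc, sm]; ring

lemma sm_add (x y : V3) : sm (x + y) = sm x + sm y := by simp [sm]; ring

lemma sm_smul (k : ℤ) (x : V3) : sm (k • x) = k * sm x := by simp [sm]; ring

lemma sm_sub (x y : V3) : sm (x - y) = sm x - sm y := by simp [sm]; ring

lemma sm_pl (a b : ℤ) : sm (pl a b) = 0 := by simp [sm, pl]

lemma pl_add (a b c d : ℤ) : pl (a + c) (b + d) = pl a b + pl c d := by
  funext i; fin_cases i <;> (simp [pl]; try ring)

lemma pl_sub (a b c d : ℤ) : pl (a - c) (b - d) = pl a b - pl c d := by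
  funext i; fin_cases i <;> (simp [pl]; try ring)

lemma pl_smul (k a b : ℤ) : pl (k * a) (k * b) = k • pl a b := by
  funext i; fin_cases i <;> (simp [pl]; try ring)

lemma cyc_pl (a b : ℤ) : cyc (pl a b) = pl (-b) (a - b) := by
  funext i; fin_cases i <;> (simp [cyc, pl]; try ring)

lemma eq_pl_of_sm_eq_zero (x : V3) (h : sm x = 0) : x = pl (x 0) (x 0 + x 1) := by
  simp only [sm] at h
  funext i; fin_cases i <;> (simp [pl]; try omega)

lemma cyc_fixed (x : V3) (h : cyc x = x) : x = x 0 • ![1,1,1] := by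
  have h0 := congrFun h 0
  have h1 := congrFun h 1
  funext i
  fin_cases i <;> simp [cyc] at h0 h1 ⊢ <;> omega


def q (a b : ℤ) : ℤ := a*a - a*b + b*b

lemma q_nonneg (a b : ℤ) : 0 ≤ q a b := by unfold q; nlinarith [sq_nonneg (2*a-b), sq_nonneg b]

lemma q_pos (a b : ℤ) (h : ¬(a = 0 ∧ b = 0)) : 0 < q a b := by
  rcases lt_or_eq_of_le (q_nonneg a b) with h' | h'
  · exact h'
  · exfalso; unfold q at h'; apply h
    constructor <;> nlinarith [sq_nonneg (2*a-b), sq_nonneg (2*b-a), sq_nonneg a, sq_nonneg b]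

/-- integer rounding: find `k` with `|A₀ - k*D| ≤ D/2`. -/
lemma round_exists (A₀ D : ℤ) (hD : 0 < D) : ∃ k, 2*(A₀ - k*D) ≤ D ∧ -D ≤ 2*(A₀ - k*D) := by
  refine ⟨(2*A₀ + D) / (2*D), ?_, ?_⟩ <;>
  · have h1 := Int.mul_ediv_add_emod (2*A₀ + D) (2*D)
    have h2 := Int.emod_nonneg (2*A₀ + D) (by positivity : (2*D) ≠ 0)
    have h3 := Int.emod_lt_of_pos (2*A₀ + D) (by positivity : 0 < 2*D)
    set k := (2*A₀ + D) / (2*D)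
    set r := (2*A₀ + D) % (2*D)
    have : 2*(A₀ - k*D) = r - D := by linarith [h1]
    omega

section Classify

variable (L' : Submodule ℤ V3)

lemma memN_J (hC : ∀ x ∈ L', cyc x ∈ L') {a b : ℤ} (h : pl a b ∈ L') : pl (-b) (a - b) ∈ L' := by
  rw [← cyc_pl]; exact hC _ h

lemma memN_comb {a b c d : ℤ} (k l : ℤ) (h1 : pl a b ∈ L') (h2 : pl c d ∈ L') :
    pl (k*a + l*c) (k*b + l*d) ∈ L' := by
  rw [pl_add, pl_smul, pl_smul]
  exact L'.add_mem (L'.smul_mem k h1) (L'.smul_mem l h2)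

/-- Division: if `(wa,wb)` has minimal positive norm in `N`, it generates. -/
lemma division (hC : ∀ x ∈ L', cyc x ∈ L') (wa wb : ℤ) (hw : pl wa wb ∈ L')
    (hwpos : 0 < q wa wb)
    (hmin : ∀ a b, pl a b ∈ L' → ¬(a = 0 ∧ b = 0) → q wa wb ≤ q a b)
    (a b : ℤ) (hab : pl a b ∈ L') :
    ∃ k l, a = k*wa + l*(-wb) ∧ b = k*wb + l*(wa - wb) := by
  set D := q wa wb with hD
  set A₀ := a*wa - a*wb + b*wb with hA₀
  set B₀ := wa*b - wb*a with hB₀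
  have cram1 : D*a = A₀*wa + B₀*(-wb) := by rw [hD, hA₀, hB₀]; unfold q; ring
  have cram2 : D*b = A₀*wb + B₀*(wa - wb) := by rw [hD, hA₀, hB₀]; unfold q; ring
  obtain ⟨k, hk1, hk2⟩ := round_exists A₀ D hwpos
  obtain ⟨l, hl1, hl2⟩ := round_exists B₀ D hwpos
  set A := A₀ - k*D with hA
  set B := B₀ - l*D with hB
  set ra := a - (k*wa + l*(-wb)) with hra
  set rb := b - (k*wb + l*(wa - wb)) with hrb
  have hrmem : pl ra rb ∈ L' := by
    rw [hra, hrb, pl_sub]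
    exact L'.sub_mem hab (memN_comb L' k l hw (memN_J L' hC hw))
  have key1 : D*ra = A*wa + B*(-wb) := by rw [hra, hA, hB]; linear_combination cram1
  have key2 : D*rb = A*wb + B*(wa - wb) := by rw [hrb, hA, hB]; linear_combination cram2
  have norm1 : q (D*ra) (D*rb) = (A*A - A*B + B*B) * D := by
    rw [key1, key2, hD]; unfold q; ring
  have norm2 : q (D*ra) (D*rb) = D*D*(q ra rb) := by unfold q; ring
  have hcanc : D * (q ra rb) = A*A - A*B + B*B := by
    have : D * (D * (q ra rb)) = D * (A*A - A*B + B*B) := by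
      rw [← mul_assoc]; rw [norm1] at norm2; linarith
    exact mul_left_cancel₀ (by omega) this
  have hbound : 4*(A*A - A*B + B*B) ≤ 3*(D*D) := by nlinarith [sq_nonneg (A+B)]
  have hzero : ra = 0 ∧ rb = 0 := by
    by_contra hcon
    have h1 := hmin ra rb hrmem hcon
    nlinarith
  refine ⟨k, l, ?_, ?_⟩ <;> [have := hzero.1; have := hzero.2] <;> omega


lemma sm_zero_cyc_sum (x : V3) (h : sm x = 0) : x + cyc x + cyc (cyc x) = 0 := by
  simp only [sm] at h
  funext i; fin_cases i <;> (simp [cyc, Matrix.vecHead, Matrix.vecTail]; omega)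

lemma decomp (d : ℤ) (hd : 0 < d)
    (hmin : ∀ x ∈ L', 0 < sm x → d ≤ sm x)
    (u' : V3) (hu' : u' ∈ L') (hsu : sm u' = d) :
    ∀ x ∈ L', ∃ k aa bb : ℤ, pl aa bb ∈ L' ∧ x = k • u' + pl aa bb := by
  intro x hx
  set k := sm x / d with hk
  set y := x - k • u' with hy
  have hymem : y ∈ L' := L'.sub_mem hx (L'.smul_mem k hu')
  have hsy : sm y = sm x % d := by
    have h5 : sm y = sm x - k * d := by rw [hy, sm_sub, sm_smul, hsu]
    rw [Int.emod_def, h5, hk]; ring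
  have h0 : 0 ≤ sm y := hsy ▸ Int.emod_nonneg _ (by omega)
  have h1 : sm y < d := hsy ▸ Int.emod_lt_of_pos _ hd
  have hsy0 : sm y = 0 := by
    rcases lt_or_eq_of_le h0 with h2 | h2
    · exact absurd (hmin y hymem h2) (by omega)
    · omega
  refine ⟨k, y 0, y 0 + y 1, ?_, ?_⟩
  · rw [← eq_pl_of_sm_eq_zero y hsy0]; exact hymem
  · rw [← eq_pl_of_sm_eq_zero y hsy0, hy]; abel

lemma mulVec3 (x : Matrix (Fin 3) (Fin 3) ℤ) (v : V3) :
    x *ᵥ v = v 0 • (fun i => x i 0) + v 1 • (fun i => x i 1) + v 2 • (fun i => x i 2) := by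
  funext i; simp [Matrix.mulVec, dotProduct, Fin.sum_univ_three]; ring

lemma mem_colSpan_iff (x : Matrix (Fin 3) (Fin 3) ℤ) (v : V3) :
    v ∈ colSpan x ↔ ∃ c : V3, x *ᵥ c = v := by
  simp [colSpan, LinearMap.mem_range, Matrix.mulVecLin_apply]

lemma classify (hC : ∀ x ∈ L', cyc x ∈ L')
    (D₀ : ℤ) (hD₀ : D₀ ≠ 0) (hD : ∀ x : V3, D₀ • x ∈ L') :
    ∃ (a b c : ℤ) (M' : Matrix (Fin 3) (Fin 3) ℤ),
      (M' = !![a, c, b; b, a, c; c, b, a] ∨ M' = !![a, b, c; a, c, -b - c; a, -b - c, b]) ∧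
      colSpan M' = L' := by
  classical
  -- nonzero element of the plane part
  have hNne : pl D₀ D₀ ∈ L' := by
    have : pl D₀ D₀ = D₀ • ![1, 0, -1] := by funext i; fin_cases i <;> simp [pl]
    rw [this]; exact hD _
  -- minimal norm element w
  have hSne : ∃ n : ℕ, ∃ a b : ℤ, pl a b ∈ L' ∧ ¬(a = 0 ∧ b = 0) ∧ (q a b).toNat = n :=
    ⟨_, D₀, D₀, hNne, by tauto, rfl⟩
  obtain ⟨wa, wb, hw, hwne, hwq⟩ := Nat.find_spec hSne
  have hwpos : 0 < q wa wb := q_pos _ _ hwne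
  have hmin : ∀ a b, pl a b ∈ L' → ¬(a = 0 ∧ b = 0) → q wa wb ≤ q a b := by
    intro a b h1 h2
    have h3 := Nat.find_min' hSne (m := (q a b).toNat) ⟨a, b, h1, h2, rfl⟩
    have h4 := q_nonneg a b
    omega
  -- minimal positive sum element u
  have hUne : ∃ n : ℕ, ∃ x, x ∈ L' ∧ 0 < sm x ∧ (sm x).toNat = n := by
    refine ⟨_, D₀ • (D₀ • ![1, 0, 0]), hD _, ?_, rfl⟩
    have : sm (D₀ • (D₀ • ![1,0,0])) = D₀ * D₀ := by simp [sm]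
    rw [this]; exact mul_self_pos.mpr hD₀
  obtain ⟨u, hu, hsu, hsuq⟩ := Nat.find_spec hUne
  set d := sm u with hd
  have hdmin : ∀ x ∈ L', 0 < sm x → d ≤ sm x := by
    intro x h1 h2
    have h3 := Nat.find_min' hUne (m := (sm x).toNat) ⟨x, h1, h2, rfl⟩
    omega
  -- the twist n = cyc u - u
  set nv := cyc u - u with hnv
  have hnvmem : nv ∈ L' := L'.sub_mem (hC u hu) hu
  have hsnv : sm nv = 0 := by rw [hnv, sub_eq_add_neg, sm_add, sm_cyc]; simp [sm]; ring
  set na := nv 0 with hna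
  set nb := nv 0 + nv 1 with hnb
  have hnvpl : nv = pl na nb := eq_pl_of_sm_eq_zero nv hsnv
  have hnpl : pl na nb ∈ L' := hnvpl ▸ hnvmem
  obtain ⟨p, q', hp1, hp2⟩ := division L' hC wa wb hw hwpos hmin na nb hnpl
  by_cases hdvd : (3 : ℤ) ∣ p + q'
  · -- CASE A : second shape
    obtain ⟨v3, hv3⟩ := hdvd
    set ma := (p - v3) * wa + v3 * (-wb) with hma
    set mb := (p - v3) * wb + v3 * (wa - wb) with hmb
    have hmmem : pl ma mb ∈ L' := memN_comb L' (p - v3) v3 hw (memN_J L' hC hw)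
    set z := u + pl ma mb with hz
    have hzmem : z ∈ L' := L'.add_mem hu hmmem
    have hzfix : cyc z = z := by
      have key : cyc z - z = pl (na - mb - ma) (nb + ma - 2 * mb) := by
        rw [hz, cyc_add, cyc_pl]
        have : cyc u = u + pl na nb := by rw [← hnvpl, hnv]; abel
        rw [this]
        rw [show u + pl na nb + pl (-mb) (ma - mb) - (u + pl ma mb)
            = pl na nb + pl (-mb) (ma - mb) - pl ma mb by abel]
        rw [← pl_add, ← pl_sub]
        congr 1 <;> ring
      have e1 : na - mb - ma = 0 := by rw [hp1, hma, hmb]; linear_combination (-wb) * hv3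
      have e2 : nb + ma - 2 * mb = 0 := by rw [hp2, hma, hmb]; linear_combination (wa - wb) * hv3
      rw [e1, e2] at key
      have : pl 0 0 = 0 := by funext i; fin_cases i <;> simp [pl]
      rw [this] at key
      exact sub_eq_zero.mp key
    obtain ⟨a, hz3⟩ : ∃ a : ℤ, z = ![a, a, a] := by
      refine ⟨z 0, ?_⟩
      have h1 := cyc_fixed z hzfix
      rw [h1]; funext i; fin_cases i <;> simp
    have hsz : sm z = d := by rw [hz, sm_add, sm_pl, add_zero, ← hd]
    have h3a : 3 * a = d := by
      have : sm z = 3 * a := by rw [hz3]; simp [sm]; ring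
      omega
    refine ⟨a, wa, wb - wa,
      !![a, wa, wb - wa; a, wb - wa, -wa - (wb - wa); a, -wa - (wb - wa), wa],
      Or.inr rfl, ?_⟩
    set M' := !![a, wa, wb - wa; a, wb - wa, -wa - (wb - wa); a, -wa - (wb - wa), wa] with hM'
    have hcol0 : (fun i => M' i 0) = z := by
      rw [hz3]; funext i; fin_cases i <;> simp [hM', Matrix.vecHead, Matrix.vecTail]
    have hcol1 : (fun i => M' i 1) = pl wa wb := by
      funext i; fin_cases i <;> (simp [hM', pl]; try ring)
    have hcol2 : (fun i => M' i 2) = pl (wb - wa) (-wa) := by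
      funext i; fin_cases i <;> (simp [hM', pl]; try ring)
    have hc2mem : pl (wb - wa) (-wa) ∈ L' := by
      have h1 := memN_J L' hC (memN_J L' hC hw)
      rw [show (-(wa - wb)) = wb - wa by ring, show (-wb - (wa - wb)) = -wa by ring] at h1
      exact h1
    have hJJ : pl (wb - wa) (-wa) = cyc (cyc (pl wa wb)) := by
      rw [cyc_pl, cyc_pl]; congr 1 <;> ring
    have hsum := sm_zero_cyc_sum (pl wa wb) (sm_pl wa wb)
    have hC1 : cyc (pl wa wb) = -(pl wa wb + cyc (cyc (pl wa wb))) := by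
      have h2 : cyc (pl wa wb) + (pl wa wb + cyc (cyc (pl wa wb))) = 0 := by
        rw [← hsum]; abel
      exact eq_neg_of_add_eq_zero_left h2
    ext x
    rw [mem_colSpan_iff]
    constructor
    · rintro ⟨c, rfl⟩
      rw [mulVec3, hcol0, hcol1, hcol2]
      exact L'.add_mem (L'.add_mem (L'.smul_mem _ hzmem) (L'.smul_mem _ hw))
        (L'.smul_mem _ hc2mem)
    · intro hx
      obtain ⟨k, aa, bb, hab, hxeq⟩ :=
        decomp L' d hsu hdmin z hzmem hsz x hx
      obtain ⟨k', l', h1', h2'⟩ := division L' hC wa wb hw hwpos hmin aa bb hab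
      refine ⟨![k, k' - l', -l'], ?_⟩
      rw [mulVec3, hcol0, hcol1, hcol2, hxeq]
      have hpl : pl aa bb = k' • pl wa wb + l' • cyc (pl wa wb) := by
        rw [h1', h2', cyc_pl, ← pl_smul, ← pl_smul, ← pl_add]
      rw [hpl, hC1, hJJ]
      have e0 : (![k, k' - l', -l'] : V3) 0 = k := by simp
      have e1 : (![k, k' - l', -l'] : V3) 1 = k' - l' := by simp
      have e2 : (![k, k' - l', -l'] : V3) 2 = -l' := by simp
      rw [e0, e1, e2]
      module
  · -- CASE B : circulant
    set ε : ℤ := if (p + q') % 3 = 1 then 1 else -1 with hε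
    have hε2 : ε = 1 ∨ ε = -1 := by rw [hε]; split <;> simp
    have hdv : (3 : ℤ) ∣ (p - ε + q') := by
      rw [hε]; split <;> omega
    obtain ⟨v3, hv3⟩ := hdv
    set ma := (p - ε - v3) * wa + v3 * (-wb) with hma
    set mb := (p - ε - v3) * wb + v3 * (wa - wb) with hmb
    have hmmem : pl ma mb ∈ L' := memN_comb L' (p - ε - v3) v3 hw (memN_J L' hC hw)
    set v := u + pl ma mb with hv
    have hvmem : v ∈ L' := L'.add_mem hu hmmem
    have hsv : sm v = d := by rw [hv, sm_add, sm_pl, add_zero, ← hd]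
    have hkey : cyc v - v = ε • pl wa wb := by
      have key : cyc v - v = pl (na - mb - ma) (nb + ma - 2 * mb) := by
        rw [hv, cyc_add, cyc_pl]
        have h4 : cyc u = u + pl na nb := by rw [← hnvpl, hnv]; abel
        rw [h4]
        rw [show u + pl na nb + pl (-mb) (ma - mb) - (u + pl ma mb)
            = pl na nb + pl (-mb) (ma - mb) - pl ma mb by abel]
        rw [← pl_add, ← pl_sub]
        congr 1 <;> ring
      have e1 : na - mb - ma = ε * wa := by rw [hp1, hma, hmb]; linear_combination (-wb) * hv3
      have e2 : nb + ma - 2 * mb = ε * wb := by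
        rw [hp2, hma, hmb]; linear_combination (wa - wb) * hv3
      rw [key, e1, e2, pl_smul]
    have hee : ε * ε = 1 := by rcases hε2 with h | h <;> rw [h] <;> ring
    have hPv : pl wa wb = ε • (cyc v - v) := by
      rw [hkey, smul_smul, hee, one_smul]
    refine ⟨v 0, v 1, v 2,
      !![v 0, v 2, v 1; v 1, v 0, v 2; v 2, v 1, v 0], Or.inl rfl, ?_⟩
    set M' := !![v 0, v 2, v 1; v 1, v 0, v 2; v 2, v 1, v 0] with hM'
    have hcol0 : (fun i => M' i 0) = v := by
      funext i; fin_cases i <;> simp [hM']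
    have hcol1 : (fun i => M' i 1) = cyc v := by
      funext i; fin_cases i <;> simp [hM', cyc]
    have hcol2 : (fun i => M' i 2) = cyc (cyc v) := by
      funext i; fin_cases i <;> simp [hM', cyc]
    ext x
    rw [mem_colSpan_iff]
    constructor
    · rintro ⟨c, rfl⟩
      rw [mulVec3, hcol0, hcol1, hcol2]
      exact L'.add_mem (L'.add_mem (L'.smul_mem _ hvmem) (L'.smul_mem _ (hC v hvmem)))
        (L'.smul_mem _ (hC _ (hC v hvmem)))
    · intro hx
      obtain ⟨k, aa, bb, hab, hxeq⟩ :=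
        decomp L' d hsu hdmin v hvmem hsv x hx
      obtain ⟨k', l', h1', h2'⟩ := division L' hC wa wb hw hwpos hmin aa bb hab
      refine ⟨![k - k' * ε, k' * ε - l' * ε, l' * ε], ?_⟩
      rw [mulVec3, hcol0, hcol1, hcol2, hxeq]
      have hpl : pl aa bb = k' • pl wa wb + l' • cyc (pl wa wb) := by
        rw [h1', h2', cyc_pl, ← pl_smul, ← pl_smul, ← pl_add]
      have hCP : cyc (pl wa wb) = ε • (cyc (cyc v) - cyc v) := by
        rw [hPv, cyc_smul, cyc_sub]
      rw [hpl, hCP, hPv]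
      have e0 : (![k - k' * ε, k' * ε - l' * ε, l' * ε] : V3) 0 = k - k' * ε := by simp
      have e1 : (![k - k' * ε, k' * ε - l' * ε, l' * ε] : V3) 1 = k' * ε - l' * ε := by simp
      have e2 : (![k - k' * ε, k' * ε - l' * ε, l' * ε] : V3) 2 = l' * ε := by simp
      rw [e0, e1, e2]
      module


end Classify

/-! ## Signed permutation machinery -/

lemma fin3_cases (i : Fin 3) : i = 0 ∨ i = 1 ∨ i = 2 := by omega

lemma signedPerm_cols {P : Matrix (Fin 3) (Fin 3) ℤ} (h : IsSignedPerm P) :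
    ∃ (τ : Fin 3 → Fin 3) (ε : Fin 3 → ℤ), Function.Injective τ ∧
      (∀ j, ε j = 1 ∨ ε j = -1) ∧
      (∀ j, P *ᵥ stdBasis j = ε j • stdBasis (τ j)) := by
  obtain ⟨hval, hrow, hcol⟩ := h
  choose τ hτ1 hτ2 using hcol
  refine ⟨τ, fun j => P (τ j) j, ?_, ?_, ?_⟩
  · intro j j' hjj
    obtain ⟨c, hc1, hc2⟩ := hrow (τ j)
    have e1 := hc2 j (hτ1 j)
    have e2 := hc2 j' (by rw [hjj]; exact hτ1 j')
    rw [e1, e2]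
  · intro j
    rcases hval (τ j) j with h | h | h
    · exact absurd h (hτ1 j)
    · exact Or.inl h
    · exact Or.inr h
  · intro j
    funext i
    have hsb : _root_.stdBasis j = Pi.single j (1 : ℤ) := rfl
    rw [hsb, Matrix.mulVec_single]
    by_cases hij : i = τ j
    · subst hij
      simp [_root_.stdBasis, Pi.single_apply]
    · have h0 : P i j = 0 := by
        by_contra hne
        exact hij (hτ2 j i hne)
      simp [h0, _root_.stdBasis, Pi.single_apply, Ne.symm hij, hij]

lemma preserve_of_comm {P M Q : Matrix (Fin 3) (Fin 3) ℤ} (h : P * M = M * Q) :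
    ∀ x ∈ colSpan M, P *ᵥ x ∈ colSpan M := by
  rintro x ⟨c, rfl⟩
  refine ⟨Q *ᵥ c, ?_⟩
  simp only [Matrix.mulVecLin_apply] at *
  rw [Matrix.mulVec_mulVec, Matrix.mulVec_mulVec, h]

/-- the cyclic shift as a map on indices -/
def cy : Fin 3 → Fin 3 := ![1, 2, 0]

lemma get_cyc (M : Matrix (Fin 3) (Fin 3) ℤ) (hsym : IsLinearlySymmetric M) :
    ∃ (P : Matrix (Fin 3) (Fin 3) ℤ) (ε : Fin 3 → ℤ),
      (∀ j, ε j = 1 ∨ ε j = -1) ∧ (∀ x ∈ colSpan M, P *ᵥ x ∈ colSpan M) ∧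
      (∀ j, P *ᵥ stdBasis j = ε j • stdBasis (cy j)) := by
  -- extract the two signed permutations
  obtain ⟨P₁, hsp₁, ⟨Q₁, hQ₁⟩, hcol₁⟩ := hsym 1
  obtain ⟨P₂, hsp₂, ⟨Q₂, hQ₂⟩, hcol₂⟩ := hsym 2
  obtain ⟨τ₁, ε₁, hinj₁, hval₁, hc₁⟩ := signedPerm_cols hsp₁
  obtain ⟨τ₂, ε₂, hinj₂, hval₂, hc₂⟩ := signedPerm_cols hsp₂
  have hpres₁ := preserve_of_comm hQ₁
  have hpres₂ := preserve_of_comm hQ₂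
  -- τ₁ 0 = 1 and τ₂ 0 = 2
  have hτ₁0 : τ₁ 0 = 1 := by
    have h := hc₁ 0
    have h0 : P₁ *ᵥ stdBasis (⟨0, (1 : Fin 3).pos⟩ : Fin 3) = P₁ *ᵥ stdBasis (0 : Fin 3) := rfl
    by_contra hne
    rcases hcol₁ with hc | hc <;>
    · rw [h0, h] at hc
      have h9 := congrFun hc 1
      simp [_root_.stdBasis, Pi.single_apply, Ne.symm hne] at h9
  have hτ₂0 : τ₂ 0 = 2 := by
    have h := hc₂ 0
    have h0 : P₂ *ᵥ stdBasis (⟨0, (2 : Fin 3).pos⟩ : Fin 3) = P₂ *ᵥ stdBasis (0 : Fin 3) := rfl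
    by_contra hne
    rcases hcol₂ with hc | hc <;>
    · rw [h0, h] at hc
      have h9 := congrFun hc 2
      simp [_root_.stdBasis, Pi.single_apply, Ne.symm hne] at h9
  -- composition helper
  have compose : ∀ (P P' : Matrix (Fin 3) (Fin 3) ℤ) (τ τ' : Fin 3 → Fin 3)
      (ε ε' : Fin 3 → ℤ),
      (∀ j, P *ᵥ stdBasis j = ε j • stdBasis (τ j)) →
      (∀ j, P' *ᵥ stdBasis j = ε' j • stdBasis (τ' j)) →
      (∀ j, (P * P') *ᵥ stdBasis j = (ε' j * ε (τ' j)) • stdBasis (τ (τ' j))) := by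
    intro P P' τ τ' ε ε' hP hP' j
    rw [← Matrix.mulVec_mulVec, hP', Matrix.mulVec_smul, hP, smul_smul, mul_comm]
  have comppres : ∀ (P P' : Matrix (Fin 3) (Fin 3) ℤ),
      (∀ x ∈ colSpan M, P *ᵥ x ∈ colSpan M) → (∀ x ∈ colSpan M, P' *ᵥ x ∈ colSpan M) →
      (∀ x ∈ colSpan M, (P * P') *ᵥ x ∈ colSpan M) := by
    intro P P' h h' x hx
    rw [← Matrix.mulVec_mulVec]
    exact h _ (h' x hx)
  -- build the result depending on the shapes of τ₁, τ₂
  rcases fin3_cases (τ₁ 1) with h11 | h11 | h11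
  · -- τ₁ = [1,0,2] : transposition (01)
    have h12 : τ₁ 2 = 2 := by
      rcases fin3_cases (τ₁ 2) with h | h | h
      · exact absurd (hinj₁ (h.trans h11.symm)) (by decide)
      · exact absurd (hinj₁ (h.trans hτ₁0.symm)) (by decide)
      · exact h
    rcases fin3_cases (τ₂ 1) with h21 | h21 | h21
    · -- τ₂ = [2,0,1] : use P₂ * P₂
      have h22 : τ₂ 2 = 1 := by
        rcases fin3_cases (τ₂ 2) with h | h | h
        · exact absurd (hinj₂ (h.trans h21.symm)) (by decide)
        · exact h
        · exact absurd (hinj₂ (h.trans hτ₂0.symm)) (by decide)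
      refine ⟨P₂ * P₂, fun j => ε₂ j * ε₂ (τ₂ j), ?_, comppres _ _ hpres₂ hpres₂, ?_⟩
      · intro j
        rcases hval₂ j with h | h <;> rcases hval₂ (τ₂ j) with h' | h' <;>
          simp [h, h']
      · intro j
        have := compose P₂ P₂ τ₂ τ₂ ε₂ ε₂ hc₂ hc₂ j
        rcases fin3_cases j with hj | hj | hj <;> subst hj <;>
          simpa [hτ₂0, h21, h22, cy, mul_comm] using this
    ·
      have h22 : τ₂ 2 = 0 := by
        rcases fin3_cases (τ₂ 2) with h | h | h
        · exact h
        · exact absurd (hinj₂ (h.trans h21.symm)) (by decide)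
        · exact absurd (hinj₂ (h.trans hτ₂0.symm)) (by decide)
      set P₃ := P₁ * P₂ with hP₃
      have hc₃ := compose P₁ P₂ τ₁ τ₂ ε₁ ε₂ hc₁ hc₂
      have hpres₃ := comppres P₁ P₂ hpres₁ hpres₂
      -- τ₃ = τ₁ ∘ τ₂ = [2,0,1]; square it
      set ε₃ : Fin 3 → ℤ := fun j => ε₂ j * ε₁ (τ₂ j) with hε₃
      set τ₃ : Fin 3 → Fin 3 := fun j => τ₁ (τ₂ j) with hτ₃
      have hc₃' : ∀ j, P₃ *ᵥ stdBasis j = ε₃ j • stdBasis (τ₃ j) := hc₃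
      have hτ₃v : τ₃ 0 = 2 ∧ τ₃ 1 = 0 ∧ τ₃ 2 = 1 := by
        refine ⟨?_, ?_, ?_⟩ <;> simp [hτ₃, hτ₂0, h21, h22, h11, h12, hτ₁0]
      refine ⟨P₃ * P₃, fun j => ε₃ j * ε₃ (τ₃ j), ?_, comppres _ _ hpres₃ hpres₃, ?_⟩
      · intro j
        have hv3 : ∀ j, ε₃ j = 1 ∨ ε₃ j = -1 := by
          intro j
          rcases hval₂ j with h | h <;> rcases hval₁ (τ₂ j) with h' | h' <;>
            simp [hε₃, h, h']
        rcases hv3 j with h | h <;> rcases hv3 (τ₃ j) with h' | h' <;> simp [h, h']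
      · intro j
        have := compose P₃ P₃ τ₃ τ₃ ε₃ ε₃ hc₃' hc₃' j
        rcases fin3_cases j with hj | hj | hj <;> subst hj <;>
          simpa [hτ₃v.1, hτ₃v.2.1, hτ₃v.2.2, cy, mul_comm] using this
    · -- τ₂ 1 = 2 contradicts injectivity with τ₂ 0 = 2
      exact absurd (hinj₂ (h21.trans hτ₂0.symm)) (by decide)
  · -- τ₁ 1 = 1 impossible
    exact absurd (hinj₁ (h11.trans hτ₁0.symm)) (by decide)
  · -- τ₁ = [1,2,0] : use P₁
    have h12 : τ₁ 2 = 0 := by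
      rcases fin3_cases (τ₁ 2) with h | h | h
      · exact h
      · exact absurd (hinj₁ (h.trans hτ₁0.symm)) (by decide)
      · exact absurd (hinj₁ (h.trans h11.symm)) (by decide)
    refine ⟨P₁, ε₁, hval₁, hpres₁, ?_⟩
    intro j
    rcases fin3_cases j with hj | hj | hj <;> subst hj <;>
      simp [hc₁, hτ₁0, h11, h12, cy]


/-- entrywise action of a `cy`-shaped signed permutation -/
lemma cyc_action {P : Matrix (Fin 3) (Fin 3) ℤ} {ε : Fin 3 → ℤ}
    (hc : ∀ j, P *ᵥ stdBasis j = ε j • stdBasis (cy j)) (x : V3) :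
    P *ᵥ x = ![ε 2 * x 2, ε 0 * x 0, ε 1 * x 1] := by
  have hent : ∀ i j, P i j = ε j * (_root_.stdBasis (cy j) i) := by
    intro i j
    have h1 := congrFun (hc j) i
    have hsb : _root_.stdBasis j = Pi.single j (1 : ℤ) := rfl
    rw [hsb, Matrix.mulVec_single] at h1
    simpa using h1
  funext i
  fin_cases i <;>
    simp [Matrix.mulVec, dotProduct, Fin.sum_univ_three, hent, cy,
      _root_.stdBasis, Pi.single_apply] <;> ring

lemma det_smul_mem (A : Matrix (Fin 3) (Fin 3) ℤ) (x : V3) : A.det • x ∈ colSpan A := by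
  refine ⟨A.adjugate *ᵥ x, ?_⟩
  simp only [Matrix.mulVecLin_apply]
  rw [Matrix.mulVec_mulVec, Matrix.mul_adjugate, Matrix.smul_mulVec, Matrix.one_mulVec]

lemma det_ne_of_colSpan_eq {A B : Matrix (Fin 3) (Fin 3) ℤ}
    (h : colSpan A = colSpan B) (hB : B.det ≠ 0) : A.det ≠ 0 := by
  have hcols : ∀ j : Fin 3, ∃ c : V3, A *ᵥ c = B *ᵥ stdBasis j := by
    intro j
    have : (B *ᵥ _root_.stdBasis j) ∈ colSpan B := ⟨_root_.stdBasis j, rfl⟩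
    rw [← h] at this
    exact this
  choose cc hcc using hcols
  have hAB : A * (Matrix.of fun i j => cc j i) = B := by
    ext i j
    have h2 := congrFun (hcc j) i
    have hsb : _root_.stdBasis j = Pi.single j (1 : ℤ) := rfl
    rw [hsb, Matrix.mulVec_single] at h2
    simp only [MulOpposite.op_one, one_smul, Matrix.col_apply] at h2
    rw [Matrix.mul_apply, ← h2]
    simp [Matrix.mulVec, dotProduct]
  intro h0
  apply hB
  rw [← hAB, Matrix.det_mul, h0, zero_mul]

/-- multiplication by a sign vector, as a linear involution -/
def sgnMul (η : V3) : V3 →ₗ[ℤ] V3 where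
  toFun x := η * x
  map_add' x y := by funext i; simp [mul_add]
  map_smul' k x := by funext i; simp [Pi.smul_apply]; ring

lemma sgnMul_involutive (η : V3) (hη : ∀ i, η i = 1 ∨ η i = -1) :
    Function.Involutive (sgnMul η) := by
  intro x
  funext i
  simp only [sgnMul, LinearMap.coe_mk, AddHom.coe_mk, Pi.mul_apply]
  rcases hη i with h | h <;> rw [h] <;> ring

def sgnEquiv (η : V3) (hη : ∀ i, η i = 1 ∨ η i = -1) : V3 ≃ₗ[ℤ] V3 :=
  LinearEquiv.ofInvolutive (sgnMul η) (sgnMul_involutive η hη)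

lemma sgnMul_stdBasis (η : V3) (i : Fin 3) :
    η * _root_.stdBasis i = η i • _root_.stdBasis i := by
  funext j
  by_cases h : j = i
  · subst h; simp [_root_.stdBasis, Pi.single_apply]
  · simp [_root_.stdBasis, Pi.single_apply, h]

lemma shift_adj (Ma Mb : Matrix (Fin 3) (Fin 3) ℤ) (η : V3)
    (hη : ∀ i, η i = 1 ∨ η i = -1)
    (G : LatticeVertex Ma ≃ₗ[ℤ] LatticeVertex Mb)
    (hG : ∀ x : V3, G (Submodule.Quotient.mk x) = Submodule.Quotient.mk (η * x)) :
    ∀ a b, (latticeGraph Ma).Adj a b → (latticeGraph Mb).Adj (G a) (G b) := by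
  intro a b hab
  simp only [latticeGraph] at hab ⊢
  obtain ⟨hne, i, hi⟩ := hab
  refine ⟨fun h => hne (G.injective h), i, ?_⟩
  have hsub : ∀ c d : LatticeVertex Ma, G c - G d = G (c - d) := by
    intro c d; rw [map_sub]
  have hmk : (Submodule.Quotient.mk (η * _root_.stdBasis i) : LatticeVertex Mb)
      = η i • Submodule.Quotient.mk (_root_.stdBasis i) := by
    rw [sgnMul_stdBasis, Submodule.Quotient.mk_smul]
  rcases hi with h | h
  · have h3 : G a - G b = η i • Submodule.Quotient.mk (_root_.stdBasis i) := by
      rw [hsub a b, h, hG, hmk]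
    rcases hη i with hs | hs
    · left; rw [h3, hs, one_smul]
    · right; rw [← neg_sub (G a) (G b), h3, hs]; simp
  · have h3 : G b - G a = η i • Submodule.Quotient.mk (_root_.stdBasis i) := by
      rw [hsub b a, h, hG, hmk]
    rcases hη i with hs | hs
    · right; rw [h3, hs, one_smul]
    · left; rw [← neg_sub (G b) (G a), h3, hs]; simp

/-- graphs of matrices whose lattices differ by a sign change are isomorphic -/
lemma graph_iso_of_signs (M M' : Matrix (Fin 3) (Fin 3) ℤ) (η : V3)
    (hη : ∀ i, η i = 1 ∨ η i = -1)
    (hmap : Submodule.map (sgnEquiv η hη : V3 →ₗ[ℤ] V3) (colSpan M) = colSpan M') :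
    Nonempty (latticeGraph M ≃g latticeGraph M') := by
  set F := Submodule.Quotient.equiv (colSpan M) (colSpan M') (sgnEquiv η hη) hmap with hF
  have hFmk : ∀ x : V3, F (Submodule.Quotient.mk x) = Submodule.Quotient.mk (η * x) := by
    intro x
    rw [hF, Submodule.Quotient.equiv_apply, Submodule.mapQ_apply]
    rfl
  have hFsymm : ∀ x : V3, F.symm (Submodule.Quotient.mk x) = Submodule.Quotient.mk (η * x) := by
    intro x
    rw [LinearEquiv.symm_apply_eq, hFmk]
    congr 1
    exact (sgnMul_involutive η hη x).symm
  refine ⟨⟨F.toEquiv, ?_⟩⟩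
  intro a b
  simp only [LinearEquiv.coe_toEquiv]
  constructor
  · intro h
    have h2 := shift_adj M' M η hη F.symm hFsymm _ _ h
    simpa using h2
  · exact shift_adj M M' η hη F hFmk a b

end LS3

/-- every linearly symmetric 3-dimensional lattice graph is isomorphic to the
lattice graph of a nonsingular matrix of one of the two given shapes. -/
theorem linearlySymmetric_3D_characterization
    (M : Matrix (Fin 3) (Fin 3) ℤ) (hM : M.det ≠ 0) (hsym : IsLinearlySymmetric M) :
    ∃ (a b c : ℤ) (M' : Matrix (Fin 3) (Fin 3) ℤ),
      (M' = !![a, c, b; b, a, c; c, b, a] ∨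
        M' = !![a, b, c; a, c, -b - c; a, -b - c, b]) ∧
      M'.det ≠ 0 ∧ Nonempty (latticeGraph M ≃g latticeGraph M') := by
  obtain ⟨P, ε, hεv, hpres, hc⟩ := LS3.get_cyc M hsym
  set s := ε 0 * ε 1 * ε 2 with hs
  set η : LS3.V3 := ![1, ε 1 * ε 2, ε 0 * ε 1] with hη
  have hηv : ∀ i, η i = 1 ∨ η i = -1 := by
    intro i
    fin_cases i <;> rcases hεv 0 with h0 | h0 <;> rcases hεv 1 with h1 | h1 <;>
      rcases hεv 2 with h2 | h2 <;> simp [hη, h0, h1, h2]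
  have hkey : ∀ x : LS3.V3, LS3.cyc (η * x) = η * (s • (P *ᵥ x)) := by
    intro x
    rw [LS3.cyc_action hc x]
    funext i
    rcases hεv 0 with h0 | h0 <;> rcases hεv 1 with h1 | h1 <;>
      rcases hεv 2 with h2 | h2 <;> fin_cases i <;>
      simp [LS3.cyc, hη, hs, h0, h1, h2, Matrix.vecHead, Matrix.vecTail] <;> ring
  set M₂ := Matrix.diagonal η * M with hM₂
  have hdiag : ∀ c : LS3.V3, M₂ *ᵥ c = η * (M *ᵥ c) := by
    intro c
    rw [hM₂, ← Matrix.mulVec_mulVec]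
    funext i
    rw [Matrix.mulVec_diagonal]
    rfl
  have hspan₂ : colSpan M₂ = Submodule.map (LS3.sgnEquiv η hηv : LS3.V3 →ₗ[ℤ] LS3.V3) (colSpan M) := by
    ext x
    rw [LS3.mem_colSpan_iff, Submodule.mem_map]
    constructor
    · rintro ⟨c, rfl⟩
      exact ⟨M *ᵥ c, ⟨c, rfl⟩, by rw [hdiag]; rfl⟩
    · rintro ⟨y, ⟨c, rfl⟩, rfl⟩
      exact ⟨c, by rw [hdiag]; rfl⟩
  have hC₂ : ∀ x ∈ colSpan M₂, LS3.cyc x ∈ colSpan M₂ := by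
    intro x hx
    obtain ⟨c, hc'⟩ := (LS3.mem_colSpan_iff M₂ x).mp hx
    have h1 : M *ᵥ c ∈ colSpan M := ⟨c, rfl⟩
    have h2 : s • (P *ᵥ (M *ᵥ c)) ∈ colSpan M :=
      (colSpan M).smul_mem s (hpres _ h1)
    obtain ⟨c', hc''⟩ := h2
    rw [← hc', hdiag c, hkey]
    refine (LS3.mem_colSpan_iff M₂ _).mpr ⟨c', ?_⟩
    rw [hdiag c', show M *ᵥ c' = s • (P *ᵥ (M *ᵥ c)) from hc'']
  have hdet₂ : M₂.det ≠ 0 := by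
    rw [hM₂, Matrix.det_mul, Matrix.det_diagonal]
    refine mul_ne_zero ?_ hM
    refine Finset.prod_ne_zero_iff.mpr fun i _ => ?_
    rcases hηv i with h | h <;> rw [h] <;> norm_num
  obtain ⟨a, b, c, M', hshape, hspan'⟩ :=
    LS3.classify (colSpan M₂) hC₂ M₂.det hdet₂ (LS3.det_smul_mem M₂)
  refine ⟨a, b, c, M', hshape, ?_, ?_⟩
  · exact LS3.det_ne_of_colSpan_eq hspan' hdet₂
  · exact LS3.graph_iso_of_signs M M' η hηv (by rw [← hspan₂, hspan'])
end

section
/- For every positive integer a, the projection over e₃ of the face-centered cubic lattice graph FCC(a) is isomorphic to the rectangular twisted torus RTT(a). -/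
open Matrix

namespace ProjFCC

def emb : (Fin 2 → ℤ) →ₗ[ℤ] (Fin 3 → ℤ) where
  toFun x := ![x 0, x 1, 0]
  map_add' x y := by funext j; fin_cases j <;> simp
  map_smul' c x := by funext j; fin_cases j <;> simp

lemma mem_iff (a : ℕ) (ha : 0 < a) (x : Fin 2 → ℤ) :
    emb x ∈ colSpan !![(a : ℤ), a, 0; a, 0, a; 0, a, a] ↔
      x ∈ colSpan !![(2 * a : ℤ), a; 0, a] := by
  have ha' : (a : ℤ) ≠ 0 := by exact_mod_cast ha.ne'
  constructor
  · rintro ⟨c, hc⟩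
    refine ⟨![c 1, c 0 - c 1], ?_⟩
    have h0 := congrFun hc 0
    have h1 := congrFun hc 1
    have h2 := congrFun hc 2
    simp [mulVecLin_apply, mulVec, dotProduct, Fin.sum_univ_three, emb] at h0 h1 h2
    have hc2 : c 2 = -(c 1) := by
      have := mul_left_cancel₀ ha' (show (a:ℤ) * (c 1 + c 2) = a * 0 by ring_nf; linarith)
      linarith
    funext j
    fin_cases j
    · simp [mulVecLin_apply, mulVec, dotProduct, Fin.sum_univ_two]
      linarith
    · simp [mulVecLin_apply, mulVec, dotProduct, Fin.sum_univ_two]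
      linarith
  · rintro ⟨d, hd⟩
    refine ⟨![d 0 + d 1, d 0, -(d 0)], ?_⟩
    have h0 := congrFun hd 0
    have h1 := congrFun hd 1
    simp [mulVecLin_apply, mulVec, dotProduct, Fin.sum_univ_two] at h0 h1
    funext j
    fin_cases j <;>
      simp [mulVecLin_apply, mulVec, dotProduct, Fin.sum_univ_three, emb] <;>
      linarith

end ProjFCC

namespace ProjFCC

def Fmap (a : ℕ) : (Fin 2 → ℤ) →ₗ[ℤ]
    LatticeVertex !![(a : ℤ), a, 0; a, 0, a; 0, a, a] :=
  (colSpan !![(a : ℤ), a, 0; a, 0, a; 0, a, a]).mkQ.comp emb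

lemma ker_Fmap (a : ℕ) (ha : 0 < a) :
    LinearMap.ker (Fmap a) = colSpan !![(2 * a : ℤ), a; 0, a] := by
  ext x
  simp only [Fmap, LinearMap.mem_ker, LinearMap.comp_apply, Submodule.mkQ_apply,
    Submodule.Quotient.mk_eq_zero]
  exact mem_iff a ha x

noncomputable def Fbar (a : ℕ) (ha : 0 < a) :
    LatticeVertex !![(2 * a : ℤ), a; 0, a] →ₗ[ℤ]
      LatticeVertex !![(a : ℤ), a, 0; a, 0, a; 0, a, a] :=
  (colSpan !![(2 * a : ℤ), a; 0, a]).liftQ (Fmap a) (le_of_eq (ker_Fmap a ha).symm)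

lemma Fbar_inj (a : ℕ) (ha : 0 < a) : Function.Injective (Fbar a ha) := by
  rw [← LinearMap.ker_eq_bot]
  exact Submodule.ker_liftQ_eq_bot _ _ _ (le_of_eq (ker_Fmap a ha))

lemma emb_std0 : emb (stdBasis (0 : Fin 2)) = stdBasis (0 : Fin 3) := by
  funext j; fin_cases j <;> simp [emb, _root_.stdBasis, Pi.single_apply]

lemma emb_std1 : emb (stdBasis (1 : Fin 2)) = stdBasis (1 : Fin 3) := by
  funext j; fin_cases j <;> simp [emb, _root_.stdBasis, Pi.single_apply]

lemma Fbar_mk (a : ℕ) (ha : 0 < a) (x : Fin 2 → ℤ) :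
    Fbar a ha (Submodule.Quotient.mk x) = Submodule.Quotient.mk (emb x) := by
  simp [Fbar, Fmap, Submodule.liftQ_apply]

lemma Fbar_std0 (a : ℕ) (ha : 0 < a) :
    Fbar a ha (Submodule.Quotient.mk (stdBasis (0 : Fin 2))) =
      Submodule.Quotient.mk (stdBasis (0 : Fin 3)) := by
  rw [Fbar_mk, emb_std0]

lemma Fbar_std1 (a : ℕ) (ha : 0 < a) :
    Fbar a ha (Submodule.Quotient.mk (stdBasis (1 : Fin 2))) =
      Submodule.Quotient.mk (stdBasis (1 : Fin 3)) := by
  rw [Fbar_mk, emb_std1]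

lemma emb_eq (x : Fin 2 → ℤ) :
    emb x = x 0 • stdBasis (0 : Fin 3) + x 1 • stdBasis (1 : Fin 3) := by
  funext j; fin_cases j <;> simp [emb, _root_.stdBasis, Pi.single_apply]

end ProjFCC


namespace ProjFCC

lemma mk_emb_mem (a : ℕ) (x : Fin 2 → ℤ) :
    (Submodule.Quotient.mk (emb x) :
        LatticeVertex !![(a : ℤ), a, 0; a, 0, a; 0, a, a]) ∈
      AddSubgroup.closure ((fun i => (Submodule.Quotient.mk (stdBasis i) :
        LatticeVertex !![(a : ℤ), a, 0; a, 0, a; 0, a, a])) '' {i | i ≠ (2 : Fin 3)}) := by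
  have h0 : (Submodule.Quotient.mk (stdBasis (0 : Fin 3)) :
      LatticeVertex !![(a : ℤ), a, 0; a, 0, a; 0, a, a]) ∈
      AddSubgroup.closure ((fun i => (Submodule.Quotient.mk (stdBasis i) :
        LatticeVertex !![(a : ℤ), a, 0; a, 0, a; 0, a, a])) '' {i | i ≠ (2 : Fin 3)}) :=
    AddSubgroup.subset_closure ⟨0, by simp, rfl⟩
  have h1 : (Submodule.Quotient.mk (stdBasis (1 : Fin 3)) :
      LatticeVertex !![(a : ℤ), a, 0; a, 0, a; 0, a, a]) ∈
      AddSubgroup.closure ((fun i => (Submodule.Quotient.mk (stdBasis i) :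
        LatticeVertex !![(a : ℤ), a, 0; a, 0, a; 0, a, a])) '' {i | i ≠ (2 : Fin 3)}) :=
    AddSubgroup.subset_closure ⟨1, by simp, rfl⟩
  rw [emb_eq, Submodule.Quotient.mk_add, Submodule.Quotient.mk_smul,
    Submodule.Quotient.mk_smul]
  exact AddSubgroup.add_mem _ (AddSubgroup.zsmul_mem _ h0 _) (AddSubgroup.zsmul_mem _ h1 _)

lemma closure_le (a : ℕ) (ha : 0 < a) :
    AddSubgroup.closure ((fun i => (Submodule.Quotient.mk (stdBasis i) :
        LatticeVertex !![(a : ℤ), a, 0; a, 0, a; 0, a, a])) '' {i | i ≠ (2 : Fin 3)}) ≤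
      (LinearMap.range (Fbar a ha)).toAddSubgroup := by
  rw [AddSubgroup.closure_le]
  rintro y ⟨i, hi, rfl⟩
  simp only [Submodule.coe_toAddSubgroup, SetLike.mem_coe, LinearMap.mem_range]
  fin_cases i
  · exact ⟨_, Fbar_std0 a ha⟩
  · exact ⟨_, Fbar_std1 a ha⟩
  · simp at hi

end ProjFCC


/-- the projection over `e₃` of `FCC(a)` is isomorphic to the rectangular
twisted torus `RTT(a)`. -/
theorem projection_FCC_iso_RTT (a : ℕ) (ha : 0 < a) :
    Nonempty (projGraph !![(a : ℤ), a, 0; a, 0, a; 0, a, a] (2 : Fin 3) ≃g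
      latticeGraph !![(2 * a : ℤ), a; 0, a]) := by
  classical
  have hmem : ∀ v, ProjFCC.Fbar a ha v ∈
      AddSubgroup.closure ((fun i => (Submodule.Quotient.mk (stdBasis i) :
        LatticeVertex !![(a : ℤ), a, 0; a, 0, a; 0, a, a])) '' {i | i ≠ (2 : Fin 3)}) := by
    intro v
    obtain ⟨x, rfl⟩ := Submodule.Quotient.mk_surjective _ v
    rw [ProjFCC.Fbar_mk]
    exact ProjFCC.mk_emb_mem a x
  set toH : LatticeVertex !![(2 * a : ℤ), a; 0, a] →
      AddSubgroup.closure ((fun i => (Submodule.Quotient.mk (stdBasis i) :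
        LatticeVertex !![(a : ℤ), a, 0; a, 0, a; 0, a, a])) '' {i | i ≠ (2 : Fin 3)}) :=
    fun v => ⟨ProjFCC.Fbar a ha v, hmem v⟩ with htoH
  have hbij : Function.Bijective toH := by
    constructor
    · intro x y h
      exact ProjFCC.Fbar_inj a ha (congrArg Subtype.val h)
    · rintro ⟨y, hy⟩
      obtain ⟨x, hx⟩ := ProjFCC.closure_le a ha hy
      exact ⟨x, Subtype.ext hx⟩
  set E := Equiv.ofBijective toH hbij with hE
  have hcoe : ∀ v, (ProjFCC.Fbar a ha (E.symm v) :
      LatticeVertex !![(a : ℤ), a, 0; a, 0, a; 0, a, a]) = ↑v :=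
    fun v => congrArg Subtype.val (E.apply_symm_apply v)
  have hdiff : ∀ v w : (AddSubgroup.closure ((fun i => (Submodule.Quotient.mk (stdBasis i) :
      LatticeVertex !![(a : ℤ), a, 0; a, 0, a; 0, a, a])) '' {i | i ≠ (2 : Fin 3)})),
      (↑v - ↑w : LatticeVertex !![(a : ℤ), a, 0; a, 0, a; 0, a, a]) =
        ProjFCC.Fbar a ha (E.symm v - E.symm w) := by
    intro v w
    rw [map_sub, hcoe, hcoe]
  refine ⟨{ toEquiv := E.symm, map_rel_iff' := ?_ }⟩
  intro v w
  constructor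
  · rintro ⟨hne, i, hcase⟩
    refine ⟨fun h => hne (by rw [h]), ?_⟩
    fin_cases i
    · refine ⟨0, by simp, ?_⟩
      rcases hcase with h | h
      · left; rw [hdiff v w, ← ProjFCC.Fbar_std0 a ha, h]; rfl
      · right; rw [hdiff w v, ← ProjFCC.Fbar_std0 a ha, h]; rfl
    · refine ⟨1, by simp, ?_⟩
      rcases hcase with h | h
      · left; rw [hdiff v w, ← ProjFCC.Fbar_std1 a ha, h]; rfl
      · right; rw [hdiff w v, ← ProjFCC.Fbar_std1 a ha, h]; rfl
  · rintro ⟨hne, i, hi, hcase⟩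
    refine ⟨fun h => hne (by rw [← E.symm.injective h]), ?_⟩
    fin_cases i
    · refine ⟨0, ?_⟩
      rcases hcase with h | h
      · left
        apply ProjFCC.Fbar_inj a ha
        rw [← hdiff v w, ProjFCC.Fbar_std0 a ha]
        exact h
      · right
        apply ProjFCC.Fbar_inj a ha
        rw [← hdiff w v, ProjFCC.Fbar_std0 a ha]
        exact h
    · refine ⟨1, ?_⟩
      rcases hcase with h | h
      · left
        apply ProjFCC.Fbar_inj a ha
        rw [← hdiff v w, ProjFCC.Fbar_std1 a ha]
        exact h
      · right
        apply ProjFCC.Fbar_inj a ha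
        rw [← hdiff w v, ProjFCC.Fbar_std1 a ha]
        exact h
    · simp at hi
end

section
/- For every positive integer a and every j ∈ {1,2,3}, the projection over e_j of the face-centered cubic lattice graph FCC(a) is isomorphic to the rectangular twisted torus RTT(a); in particular all three projections of FCC(a) are pairwise isomorphic (FCC(a) is the prismatic doubly twisted torus of side a). -/
open Matrix

namespace FCCAux

def E (j : Fin 3) : Matrix (Fin 3) (Fin 2) ℤ :=
  Matrix.of fun r c => if r = j.succAbove c then 1 else 0

lemma mem_colSpan {ι : Type*} [Fintype ι] [DecidableEq ι] (M : Matrix ι ι ℤ) (v : ι → ℤ) :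
    v ∈ colSpan M ↔ ∃ u, M.mulVec u = v := by
  simp [colSpan, LinearMap.mem_range, Matrix.mulVecLin_apply]

lemma E_single (j : Fin 3) (c : Fin 2) :
    (E j).mulVec (stdBasis c) = stdBasis (j.succAbove c) := by
  funext r
  rw [_root_.stdBasis, Matrix.mulVec_single]
  simp [E, _root_.stdBasis, Pi.single_apply]

lemma two_decomp (x : Fin 2 → ℤ) :
    x = x 0 • stdBasis (0 : Fin 2) + x 1 • stdBasis (1 : Fin 2) := by
  funext k; fin_cases k <;> simp [_root_.stdBasis]

lemma key (a : ℕ) (j : Fin 3) (x : Fin 2 → ℤ) :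
    (E j).mulVec x ∈ colSpan !![(a : ℤ), a, 0; a, 0, a; 0, a, a] ↔
      x ∈ colSpan !![(2 * a : ℤ), a; 0, a] := by
  rw [mem_colSpan, mem_colSpan]
  fin_cases j
  · constructor
    · rintro ⟨u, hu⟩
      have h0 := congrFun hu 0; have h1 := congrFun hu 1; have h2 := congrFun hu 2
      simp [Matrix.mulVec, dotProduct, Fin.sum_univ_succ, E, Fin.succAbove] at h0 h1 h2
      refine ⟨![u 0, u 2 - u 0], ?_⟩
      funext k; fin_cases k <;>
        simp [Matrix.mulVec, dotProduct, Fin.sum_univ_succ] <;> linarith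
    · rintro ⟨s, rfl⟩
      refine ⟨![s 0, -s 0, s 0 + s 1], ?_⟩
      funext r; fin_cases r <;>
        simp [Matrix.mulVec, dotProduct, Fin.sum_univ_succ, E, Fin.succAbove] <;> ring
  · constructor
    · rintro ⟨u, hu⟩
      have h0 := congrFun hu 0; have h1 := congrFun hu 1; have h2 := congrFun hu 2
      simp [Matrix.mulVec, dotProduct, Fin.sum_univ_succ, E, Fin.succAbove] at h0 h1 h2
      refine ⟨![u 0, u 1 - u 0], ?_⟩
      funext k; fin_cases k <;>
        simp [Matrix.mulVec, dotProduct, Fin.sum_univ_succ] <;> linarith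
    · rintro ⟨s, rfl⟩
      refine ⟨![s 0, s 0 + s 1, -s 0], ?_⟩
      funext r; fin_cases r <;>
        simp [Matrix.mulVec, dotProduct, Fin.sum_univ_succ, E, Fin.succAbove] <;> ring
  · constructor
    · rintro ⟨u, hu⟩
      have h0 := congrFun hu 0; have h1 := congrFun hu 1; have h2 := congrFun hu 2
      simp [Matrix.mulVec, dotProduct, Fin.sum_univ_succ, E, Fin.succAbove] at h0 h1 h2
      refine ⟨![u 1, u 0 - u 1], ?_⟩
      funext k; fin_cases k <;>
        simp [Matrix.mulVec, dotProduct, Fin.sum_univ_succ] <;> linarith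
    · rintro ⟨s, rfl⟩
      refine ⟨![s 0 + s 1, s 0, -s 0], ?_⟩
      funext r; fin_cases r <;>
        simp [Matrix.mulVec, dotProduct, Fin.sum_univ_succ, E, Fin.succAbove] <;> ring

end FCCAux

namespace FCCAux

variable (a : ℕ)

abbrev Mf (a : ℕ) : Matrix (Fin 3) (Fin 3) ℤ := !![(a : ℤ), a, 0; a, 0, a; 0, a, a]
abbrev Mr (a : ℕ) : Matrix (Fin 2) (Fin 2) ℤ := !![(2 * a : ℤ), a; 0, a]

def φ (j : Fin 3) : (Fin 2 → ℤ) →ₗ[ℤ] (Fin 3 → ℤ) := (E j).mulVecLin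

lemma φ_apply (j : Fin 3) (x : Fin 2 → ℤ) : φ j x = (E j).mulVec x := rfl

lemma hle (j : Fin 3) : colSpan (Mr a) ≤ (colSpan (Mf a)).comap (φ j) := by
  intro x hx
  exact Submodule.mem_comap.2 ((key a j x).2 hx)

def ψ (j : Fin 3) : ((Fin 2 → ℤ) ⧸ colSpan (Mr a)) →ₗ[ℤ] ((Fin 3 → ℤ) ⧸ colSpan (Mf a)) :=
  (colSpan (Mr a)).mapQ (colSpan (Mf a)) (φ j) (hle a j)

lemma ψ_mk (j : Fin 3) (x : Fin 2 → ℤ) :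
    ψ a j (Submodule.Quotient.mk x) = Submodule.Quotient.mk (φ j x) :=
  Submodule.mapQ_apply _ _ _ x

lemma ψ_inj (j : Fin 3) : Function.Injective (ψ a j) := by
  rw [← LinearMap.ker_eq_bot, LinearMap.ker_eq_bot']
  intro q hq
  obtain ⟨x, rfl⟩ := Submodule.Quotient.mk_surjective _ q
  rw [ψ_mk, Submodule.Quotient.mk_eq_zero] at hq
  rw [Submodule.Quotient.mk_eq_zero]
  exact (key a j x).1 hq

end FCCAux

namespace FCCAux

variable (a : ℕ)

noncomputable def H (j : Fin 3) : AddSubgroup (LatticeVertex (Mf a)) :=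
  AddSubgroup.closure
    ((fun i => (Submodule.Quotient.mk (stdBasis i) : LatticeVertex (Mf a))) '' {i | i ≠ j})

lemma gen_mem (j : Fin 3) (c : Fin 2) :
    (Submodule.Quotient.mk (stdBasis (j.succAbove c)) : LatticeVertex (Mf a)) ∈ H a j :=
  AddSubgroup.subset_closure ⟨j.succAbove c, Fin.succAbove_ne j c, rfl⟩

lemma ψ_mem (j : Fin 3) (q : (Fin 2 → ℤ) ⧸ colSpan (Mr a)) : ψ a j q ∈ H a j := by
  obtain ⟨x, rfl⟩ := Submodule.Quotient.mk_surjective _ q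
  rw [ψ_mk]
  have hx : φ j x = x 0 • stdBasis (j.succAbove 0) + x 1 • stdBasis (j.succAbove 1) := by
    conv_lhs => rw [two_decomp x]
    rw [map_add, _root_.map_smul, _root_.map_smul]
    simp only [φ_apply, E_single]
  rw [hx]
  have : (Submodule.Quotient.mk (x 0 • stdBasis (j.succAbove 0) + x 1 • stdBasis (j.succAbove 1))
      : LatticeVertex (Mf a)) =
      x 0 • Submodule.Quotient.mk (stdBasis (j.succAbove 0)) +
      x 1 • Submodule.Quotient.mk (stdBasis (j.succAbove 1)) := by
    rw [Submodule.Quotient.mk_add, Submodule.Quotient.mk_smul, Submodule.Quotient.mk_smul]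
  rw [this]
  have h0 := gen_mem a j 0
  have h1 := gen_mem a j 1
  exact AddSubgroup.add_mem _ (AddSubgroup.zsmul_mem _ h0 _) (AddSubgroup.zsmul_mem _ h1 _)

lemma ψ_surj (j : Fin 3) (v : LatticeVertex (Mf a)) (hv : v ∈ H a j) :
    ∃ q, ψ a j q = v := by
  induction hv using AddSubgroup.closure_induction with
  | mem x hx =>
      obtain ⟨i, hi, rfl⟩ := hx
      obtain ⟨c, rfl⟩ := Fin.exists_succAbove_eq (Set.mem_setOf.1 hi)
      exact ⟨Submodule.Quotient.mk (stdBasis c), by rw [ψ_mk, φ_apply, E_single]⟩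
  | zero => exact ⟨0, map_zero _⟩
  | add x y _ _ hx hy =>
      obtain ⟨qx, rfl⟩ := hx; obtain ⟨qy, rfl⟩ := hy
      exact ⟨qx + qy, map_add _ _ _⟩
  | neg x _ hx =>
      obtain ⟨qx, rfl⟩ := hx
      exact ⟨-qx, map_neg _ _⟩

end FCCAux

namespace FCCAux

variable (a : ℕ)

noncomputable def F (j : Fin 3) (q : (Fin 2 → ℤ) ⧸ colSpan (Mr a)) : H a j :=
  ⟨ψ a j q, ψ_mem a j q⟩

lemma F_bij (j : Fin 3) : Function.Bijective (F a j) :=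
  ⟨fun x y h => ψ_inj a j (congrArg Subtype.val h),
   fun v => (ψ_surj a j v.1 v.2).imp fun _ hq => Subtype.ext hq⟩

lemma adj_iff (j : Fin 3) (v w : (Fin 2 → ℤ) ⧸ colSpan (Mr a)) :
    (projGraph (Mf a) j).Adj (F a j v) (F a j w) ↔ (latticeGraph (Mr a)).Adj v w := by
  constructor
  · rintro ⟨hne, i, hi, h⟩
    obtain ⟨c, rfl⟩ := Fin.exists_succAbove_eq hi
    refine ⟨fun hvw => hne (by rw [hvw]), c, ?_⟩
    have key : ∀ p q : (Fin 2 → ℤ) ⧸ colSpan (Mr a),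
        ψ a j p - ψ a j q = Submodule.Quotient.mk (stdBasis (j.succAbove c)) →
        p - q = Submodule.Quotient.mk (stdBasis c) := by
      intro p q hpq
      apply ψ_inj a j
      rw [map_sub, hpq, ψ_mk, φ_apply, E_single]
    rcases h with h | h
    · exact Or.inl (key v w h)
    · exact Or.inr (key w v h)
  · rintro ⟨hne, c, h⟩
    refine ⟨fun hFvw => hne ((F_bij a j).1 hFvw), j.succAbove c, Fin.succAbove_ne j c, ?_⟩
    have key : ∀ p q : (Fin 2 → ℤ) ⧸ colSpan (Mr a),
        p - q = Submodule.Quotient.mk (stdBasis c) →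
        ψ a j p - ψ a j q = Submodule.Quotient.mk (stdBasis (j.succAbove c)) := by
      intro p q hpq
      rw [← map_sub, hpq, ψ_mk, φ_apply, E_single]
    rcases h with h | h
    · exact Or.inl (key v w h)
    · exact Or.inr (key w v h)

noncomputable def iso (j : Fin 3) : latticeGraph (Mr a) ≃g projGraph (Mf a) j where
  toEquiv := Equiv.ofBijective (F a j) (F_bij a j)
  map_rel_iff' := adj_iff a j _ _

end FCCAux

theorem projections_FCC_iso_RTT' (a : ℕ) (ha : 0 < a) :
    (∀ j : Fin 3, Nonempty (projGraph !![(a : ℤ), a, 0; a, 0, a; 0, a, a] j ≃g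
      latticeGraph !![(2 * a : ℤ), a; 0, a])) ∧
    (∀ j k : Fin 3, Nonempty (projGraph !![(a : ℤ), a, 0; a, 0, a; 0, a, a] j ≃g
      projGraph !![(a : ℤ), a, 0; a, 0, a; 0, a, a] k)) := by
  refine ⟨fun j => ⟨(FCCAux.iso a j).symm⟩,
    fun j k => ⟨(FCCAux.iso a j).symm.trans (FCCAux.iso a k)⟩⟩

/-- every projection of `FCC(a)` is isomorphic to `RTT(a)`; in particular,
all three projections are pairwise isomorphic. -/
theorem projections_FCC_iso_RTT (a : ℕ) (ha : 0 < a) :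
    (∀ j : Fin 3, Nonempty (projGraph !![(a : ℤ), a, 0; a, 0, a; 0, a, a] j ≃g
      latticeGraph !![(2 * a : ℤ), a; 0, a])) ∧
    (∀ j k : Fin 3, Nonempty (projGraph !![(a : ℤ), a, 0; a, 0, a; 0, a, a] j ≃g
      projGraph !![(a : ℤ), a, 0; a, 0, a; 0, a, a] k)) := by
  exact ⟨fun j => ⟨(FCCAux.iso a j).symm⟩,
    fun j k => ⟨(FCCAux.iso a j).symm.trans (FCCAux.iso a k)⟩⟩
end

section
/- For every positive integer a, the projection over e₃ of the body-centered cubic lattice graph BCC(a) is isomorphic to the two-dimensional torus T(2a,2a). -/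
open Matrix

namespace BCCAux

def Mb (a : ℕ) : Matrix (Fin 3) (Fin 3) ℤ := !![-(a : ℤ), a, a; a, -a, a; a, a, -a]

def fmap (a : ℕ) : (Fin 3 → ℤ) →ₗ[ℤ] (Fin 2 → ZMod (2 * a)) where
  toFun x j := ((x j.castSucc + x 2 : ℤ) : ZMod (2 * a))
  map_add' x y := by funext j; push_cast [Pi.add_apply]; ring
  map_smul' c x := by
    funext j
    simp only [Pi.smul_apply, smul_eq_mul, RingHom.id_apply, zsmul_eq_mul]
    push_cast
    ring

lemma cast_two_mul (a : ℕ) (z : ℤ) : ((2 * (a : ℤ) * z : ℤ) : ZMod (2 * a)) = 0 := by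
  have : ((2 * a : ℕ) : ℤ) ∣ 2 * (a : ℤ) * z := ⟨z, by push_cast; ring⟩
  exact (ZMod.intCast_zmod_eq_zero_iff_dvd _ _).mpr this

lemma colSpan_le (a : ℕ) : colSpan (Mb a) ≤ LinearMap.ker (fmap a) := by
  rintro x ⟨y, rfl⟩
  simp only [LinearMap.mem_ker]
  have key : ∀ z : ℤ, ((2 * a : ℕ) : ℤ) ∣ z → ((z : ℤ) : ZMod (2 * a)) = 0 :=
    fun z hz => (ZMod.intCast_zmod_eq_zero_iff_dvd _ _).mpr hz
  funext j
  fin_cases j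
  · refine key _ ⟨y 1, ?_⟩
    simp [Mb, Matrix.mulVecLin_apply, Matrix.mulVec, dotProduct, Fin.sum_univ_three,
      Fin.castSucc_zero]
    push_cast
    ring
  · refine key _ ⟨y 0, ?_⟩
    simp [Mb, Matrix.mulVecLin_apply, Matrix.mulVec, dotProduct, Fin.sum_univ_three,
      Fin.castSucc_one]
    push_cast
    ring

def fbar (a : ℕ) : LatticeVertex (Mb a) →ₗ[ℤ] (Fin 2 → ZMod (2 * a)) :=
  (colSpan (Mb a)).liftQ (fmap a) (colSpan_le a)

lemma fbar_mk (a : ℕ) (x : Fin 3 → ℤ) :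
    fbar a (Submodule.Quotient.mk x) = fmap a x :=
  Submodule.liftQ_apply _ _ _

lemma mem_colSpan (a : ℕ) (x y : ℤ) (hx : ((2 * a : ℕ) : ℤ) ∣ x) (hy : ((2 * a : ℕ) : ℤ) ∣ y) :
    ![x, y, 0] ∈ colSpan (Mb a) := by
  obtain ⟨x', rfl⟩ := hx
  obtain ⟨y', rfl⟩ := hy
  refine ⟨![y', x', x' + y'], ?_⟩
  funext j
  fin_cases j <;>
  · simp [Mb, Matrix.mulVecLin_apply, Matrix.mulVec, dotProduct, Fin.sum_univ_three]
    push_cast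
    ring

/-- The generating set in the statement. -/
def genSet (a : ℕ) : Set (LatticeVertex (Mb a)) :=
  (fun i => (Submodule.Quotient.mk (stdBasis i) : LatticeVertex (Mb a))) '' {i : Fin 3 | i ≠ 2}

lemma stdBasis_zero : (_root_.stdBasis (0 : Fin 3)) = ![1, 0, 0] := by
  funext j; fin_cases j <;> simp [_root_.stdBasis, Pi.single_apply, Fin.ext_iff]

lemma stdBasis_one : (_root_.stdBasis (1 : Fin 3)) = ![0, 1, 0] := by
  funext j; fin_cases j <;> simp [_root_.stdBasis, Pi.single_apply, Fin.ext_iff]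

lemma mem_H (a : ℕ) (x y : ℤ) :
    (Submodule.Quotient.mk ![x, y, 0] : LatticeVertex (Mb a)) ∈ AddSubgroup.closure (genSet a) := by
  have h0 : (Submodule.Quotient.mk (stdBasis 0) : LatticeVertex (Mb a)) ∈
      AddSubgroup.closure (genSet a) :=
    AddSubgroup.subset_closure ⟨0, by simp, rfl⟩
  have h1 : (Submodule.Quotient.mk (stdBasis 1) : LatticeVertex (Mb a)) ∈
      AddSubgroup.closure (genSet a) :=
    AddSubgroup.subset_closure ⟨1, by simp [Fin.ext_iff], rfl⟩
  have hv : (![x, y, 0] : Fin 3 → ℤ) = x • stdBasis 0 + y • stdBasis 1 := by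
    funext j; fin_cases j <;> simp [stdBasis_zero, stdBasis_one]
  rw [hv]
  have : (Submodule.Quotient.mk (x • stdBasis 0 + y • stdBasis 1) : LatticeVertex (Mb a)) =
      x • Submodule.Quotient.mk (stdBasis 0) + y • Submodule.Quotient.mk (stdBasis 1) := by
    rfl
  rw [this]
  exact AddSubgroup.add_mem _ (AddSubgroup.zsmul_mem _ h0 x) (AddSubgroup.zsmul_mem _ h1 y)

lemma exists_repr (a : ℕ) {h : LatticeVertex (Mb a)} (hh : h ∈ AddSubgroup.closure (genSet a)) :
    ∃ x y : ℤ, h = Submodule.Quotient.mk ![x, y, 0] := by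
  induction hh using AddSubgroup.closure_induction with
  | mem z hz =>
    obtain ⟨i, hi, rfl⟩ := hz
    have h01 : i = 0 ∨ i = 1 := by
      rcases i with ⟨iv, hiv⟩
      simp only [Set.mem_setOf_eq, Ne, Fin.ext_iff] at hi ⊢
      omega
    rcases h01 with rfl | rfl
    · exact ⟨1, 0, congrArg Submodule.Quotient.mk stdBasis_zero⟩
    · exact ⟨0, 1, congrArg Submodule.Quotient.mk stdBasis_one⟩
  | zero => exact ⟨0, 0, by rw [show (![0,0,0] : Fin 3 → ℤ) = 0 from by funext j; fin_cases j <;> rfl]; rfl⟩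
  | add u v hu hv ihu ihv =>
    obtain ⟨x1, y1, rfl⟩ := ihu
    obtain ⟨x2, y2, rfl⟩ := ihv
    refine ⟨x1 + x2, y1 + y2, ?_⟩
    rw [show (![x1+x2, y1+y2, 0] : Fin 3 → ℤ) = ![x1,y1,0] + ![x2,y2,0] from by
      funext j; fin_cases j <;> simp]
    rfl
  | neg u hu ihu =>
    obtain ⟨x1, y1, rfl⟩ := ihu
    refine ⟨-x1, -y1, ?_⟩
    rw [show (![-x1, -y1, 0] : Fin 3 → ℤ) = -(![x1,y1,0]) from by
      funext j; fin_cases j <;> simp]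
    rfl

lemma fmap_apply (a : ℕ) (x : Fin 3 → ℤ) (j : Fin 2) :
    fmap a x j = ((x j.castSucc + x 2 : ℤ) : ZMod (2 * a)) := rfl

lemma fbar_eq_zero (a : ℕ) {h : LatticeVertex (Mb a)}
    (hh : h ∈ AddSubgroup.closure (genSet a)) (h0 : fbar a h = 0) : h = 0 := by
  obtain ⟨x, y, rfl⟩ := exists_repr a hh
  rw [Submodule.Quotient.mk_eq_zero]
  rw [fbar_mk] at h0
  have hx : ((x : ℤ) : ZMod (2 * a)) = 0 := by
    have := congrFun h0 0
    rw [fmap_apply] at this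
    simpa using this
  have hy : ((y : ℤ) : ZMod (2 * a)) = 0 := by
    have := congrFun h0 1
    rw [fmap_apply] at this
    simpa using this
  exact mem_colSpan a x y ((ZMod.intCast_zmod_eq_zero_iff_dvd _ _).mp hx)
    ((ZMod.intCast_zmod_eq_zero_iff_dvd _ _).mp hy)

lemma diff_eq_iff (a : ℕ) {d c : LatticeVertex (Mb a)}
    (hd : d ∈ AddSubgroup.closure (genSet a)) (hc : c ∈ AddSubgroup.closure (genSet a)) :
    d = c ↔ fbar a d = fbar a c := by
  constructor
  · rintro rfl; rfl
  · intro h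
    have h2 : d - c = 0 :=
      fbar_eq_zero a (AddSubgroup.sub_mem _ hd hc) (by rw [map_sub, h, sub_self])
    exact sub_eq_zero.mp h2

lemma e0_mem (a : ℕ) : (Submodule.Quotient.mk (_root_.stdBasis 0) : LatticeVertex (Mb a)) ∈
    AddSubgroup.closure (genSet a) :=
  AddSubgroup.subset_closure ⟨0, by simp, rfl⟩

lemma e1_mem (a : ℕ) : (Submodule.Quotient.mk (_root_.stdBasis 1) : LatticeVertex (Mb a)) ∈
    AddSubgroup.closure (genSet a) :=
  AddSubgroup.subset_closure ⟨1, by simp [Fin.ext_iff], rfl⟩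

lemma fbar_e0 (a : ℕ) :
    fbar a (Submodule.Quotient.mk (_root_.stdBasis 0)) = ![(1 : ZMod (2 * a)), 0] := by
  rw [fbar_mk]
  funext j
  rw [fmap_apply]
  fin_cases j <;> simp [stdBasis_zero]

lemma fbar_e1 (a : ℕ) :
    fbar a (Submodule.Quotient.mk (_root_.stdBasis 1)) = ![(0 : ZMod (2 * a)), 1] := by
  rw [fbar_mk]
  funext j
  rw [fmap_apply]
  fin_cases j <;> simp [stdBasis_one]

noncomputable def vertEquiv (a : ℕ) [NeZero (2 * a)] :
    (AddSubgroup.closure (genSet a)) ≃ (Fin 2 → ZMod (2 * a)) where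
  toFun v := fbar a v.1
  invFun u := ⟨Submodule.Quotient.mk ![((u 0).val : ℤ), ((u 1).val : ℤ), 0], mem_H a _ _⟩
  left_inv := by
    rintro ⟨v, hv⟩
    obtain ⟨x, y, rfl⟩ := exists_repr a hv
    apply Subtype.ext
    show Submodule.Quotient.mk _ = Submodule.Quotient.mk _
    rw [Submodule.Quotient.eq]
    have hu0 : fbar a (Submodule.Quotient.mk ![x, y, 0]) 0 = ((x : ℤ) : ZMod (2 * a)) := by
      rw [fbar_mk, fmap_apply]; simp
    have hu1 : fbar a (Submodule.Quotient.mk ![x, y, 0]) 1 = ((y : ℤ) : ZMod (2 * a)) := by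
      rw [fbar_mk, fmap_apply]; simp
    set u := fbar a (Submodule.Quotient.mk ![x, y, 0])
    have hdiff : (![((u 0).val : ℤ), ((u 1).val : ℤ), 0] - ![x, y, 0] : Fin 3 → ℤ) =
        ![((u 0).val : ℤ) - x, ((u 1).val : ℤ) - y, 0] := by
      funext j; fin_cases j <;> simp
    rw [hdiff]
    apply mem_colSpan
    · rw [← ZMod.intCast_zmod_eq_zero_iff_dvd]
      push_cast
      rw [← hu0]
      simp [ZMod.natCast_val, ZMod.cast_id]
    · rw [← ZMod.intCast_zmod_eq_zero_iff_dvd]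
      push_cast
      rw [← hu1]
      simp [ZMod.natCast_val, ZMod.cast_id]
  right_inv := by
    intro u
    funext j
    show fbar a (Submodule.Quotient.mk _) j = u j
    rw [fbar_mk, fmap_apply]
    fin_cases j <;> simp [ZMod.natCast_val, ZMod.cast_id]

lemma step_iff {n : ℕ} (z z' : ZMod n) :
    (z = z' + 1 ∨ z' = z + 1) ↔ (z - z' = 1 ∨ z' - z = 1) := by
  constructor
  · rintro (h | h)
    · left; rw [h]; ring
    · right; rw [h]; ring
  · rintro (h | h)
    · left; linear_combination h
    · right; linear_combination h

lemma torus_adj_iff {n : ℕ} (u u' : ∀ _ : Fin 2, ZMod n) :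
    (torusGraph (fun _ : Fin 2 => n)).Adj u u' ↔ u ≠ u' ∧
      (u - u' = ![1, 0] ∨ u' - u = ![1, 0] ∨ u - u' = ![0, 1] ∨ u' - u = ![0, 1]) := by
  unfold torusGraph
  constructor
  · rintro ⟨hne, i, hall, hstep⟩
    refine ⟨hne, ?_⟩
    rw [step_iff] at hstep
    fin_cases i
    · have h1 : u 1 = u' 1 := hall 1 (by decide)
      rcases hstep with h | h
      · exact Or.inl (by funext j; fin_cases j <;> simp_all [sub_eq_zero])
      · exact Or.inr (Or.inl (by funext j; fin_cases j <;> simp_all [sub_eq_zero]))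
    · have h0 : u 0 = u' 0 := hall 0 (by decide)
      rcases hstep with h | h
      · exact Or.inr (Or.inr (Or.inl (by funext j; fin_cases j <;> simp_all [sub_eq_zero])))
      · exact Or.inr (Or.inr (Or.inr (by funext j; fin_cases j <;> simp_all [sub_eq_zero])))
  · rintro ⟨hne, h | h | h | h⟩
    · refine ⟨hne, 0, ?_, ?_⟩
      · intro j hj
        have hj1 : j = 1 := by omega
        subst hj1
        have := congrFun h 1
        simpa [sub_eq_zero] using this
      · left
        have := congrFun h 0
        simp at this
        linear_combination this
    · refine ⟨hne, 0, ?_, ?_⟩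
      · intro j hj
        have hj1 : j = 1 := by omega
        subst hj1
        have := congrFun h 1
        simp [sub_eq_zero] at this
        exact this.symm
      · right
        have := congrFun h 0
        simp at this
        linear_combination this
    · refine ⟨hne, 1, ?_, ?_⟩
      · intro j hj
        have hj0 : j = 0 := by omega
        subst hj0
        have := congrFun h 0
        simpa [sub_eq_zero] using this
      · left
        have := congrFun h 1
        simp at this
        linear_combination this
    · refine ⟨hne, 1, ?_, ?_⟩
      · intro j hj
        have hj0 : j = 0 := by omega
        subst hj0
        have := congrFun h 0
        simp [sub_eq_zero] at this
        exact this.symm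
      · right
        have := congrFun h 1
        simp at this
        linear_combination this

lemma proj_adj_iff (a : ℕ) (v w : AddSubgroup.closure (genSet a)) :
    (projGraph (Mb a) (2 : Fin 3)).Adj v w ↔ (v ≠ w ∧
      ((v : LatticeVertex (Mb a)) - (w : LatticeVertex (Mb a)) =
          Submodule.Quotient.mk (_root_.stdBasis 0) ∨
       (w : LatticeVertex (Mb a)) - (v : LatticeVertex (Mb a)) =
          Submodule.Quotient.mk (_root_.stdBasis 0) ∨
       (v : LatticeVertex (Mb a)) - (w : LatticeVertex (Mb a)) =
          Submodule.Quotient.mk (_root_.stdBasis 1) ∨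
       (w : LatticeVertex (Mb a)) - (v : LatticeVertex (Mb a)) =
          Submodule.Quotient.mk (_root_.stdBasis 1))) := by
  unfold projGraph spannedSubgraph
  constructor
  · rintro ⟨hne, i, hi, h⟩
    refine ⟨hne, ?_⟩
    have h01 : i = 0 ∨ i = 1 := by
      rcases i with ⟨iv, hiv⟩
      simp only [Set.mem_setOf_eq, Ne, Fin.ext_iff] at hi ⊢
      omega
    rcases h01 with rfl | rfl
    · tauto
    · tauto
  · rintro ⟨hne, h | h | h | h⟩
    · exact ⟨hne, 0, by simp [Fin.ext_iff], Or.inl h⟩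
    · exact ⟨hne, 0, by simp [Fin.ext_iff], Or.inr h⟩
    · exact ⟨hne, 1, by simp [Fin.ext_iff], Or.inl h⟩
    · exact ⟨hne, 1, by simp [Fin.ext_iff], Or.inr h⟩

noncomputable def bccIso (a : ℕ) [NeZero (2 * a)] :
    projGraph (Mb a) (2 : Fin 3) ≃g torusGraph (fun _ : Fin 2 => 2 * a) where
  toEquiv := vertEquiv a
  map_rel_iff' := by
    intro v w
    rw [torus_adj_iff]; erw [proj_adj_iff a v w]
    have key : ∀ (d c : LatticeVertex (Mb a)) (t : Fin 2 → ZMod (2 * a)),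
        d ∈ AddSubgroup.closure (genSet a) → c ∈ AddSubgroup.closure (genSet a) →
        fbar a c = t → (fbar a d = t ↔ d = c) := by
      intro d c t hd hc hct
      rw [← hct]
      exact (diff_eq_iff a hd hc).symm
    refine and_congr ?_ ?_
    · exact (Equiv.injective (vertEquiv a)).ne_iff
    · have comp : ∀ (x y : AddSubgroup.closure (genSet a))
          (c : LatticeVertex (Mb a)) (t : Fin 2 → ZMod (2 * a)),
          c ∈ AddSubgroup.closure (genSet a) → fbar a c = t →
          (fbar a (x : LatticeVertex (Mb a)) - fbar a (y : LatticeVertex (Mb a)) = t ↔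
            (x : LatticeVertex (Mb a)) - (y : LatticeVertex (Mb a)) = c) := by
        intro x y c t hc hct
        rw [← map_sub]
        exact key _ _ _ (AddSubgroup.sub_mem _ x.2 y.2) hc hct
      refine or_congr ?_ (or_congr ?_ (or_congr ?_ ?_))
      · exact comp v w _ _ (e0_mem a) (fbar_e0 a)
      · exact comp w v _ _ (e0_mem a) (fbar_e0 a)
      · exact comp v w _ _ (e1_mem a) (fbar_e1 a)
      · exact comp w v _ _ (e1_mem a) (fbar_e1 a)

end BCCAux

/-- the projection over `e₃` of `BCC(a)` is isomorphic to the
two-dimensional torus `T(2a,2a)`. -/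
theorem projection_BCC_iso_torus (a : ℕ) (ha : 0 < a) :
    Nonempty (projGraph !![-(a : ℤ), a, a; a, -a, a; a, a, -a] (2 : Fin 3) ≃g
      torusGraph ![2 * a, 2 * a]) := by
  haveI : NeZero (2 * a) := ⟨by omega⟩
  rw [show (![2 * a, 2 * a] : Fin 2 → ℕ) = fun _ => 2 * a from by
    funext i; fin_cases i <;> rfl]
  exact ⟨BCCAux.bccIso a⟩
end

section
/- For every positive integer a, the lattice graph 4D-BCC(a), generated by the 4×4 matrix with rows (2a,0,0,a),(0,2a,0,a),(0,0,2a,a),(0,0,0,a), is linearly symmetric, and its projection over e₄ is isomorphic to the three-dimensional torus T(2a,2a,2a) (the primitive cubic lattice graph PC(2a)). -/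
open Matrix

section BCC
variable (a : ℕ)

def Mbcc : Matrix (Fin 4) (Fin 4) ℤ :=
  !![(2 * a : ℤ), 0, 0, a; 0, 2 * a, 0, a; 0, 0, 2 * a, a; 0, 0, 0, a]

def Fmap : (Fin 4 → ℤ) →ₗ[ℤ] (Fin 3 → ZMod (2 * a)) where
  toFun v := fun k => ((v k.castSucc - v 3 : ℤ) : ZMod (2 * a))
  map_add' v w := by funext k; push_cast [Pi.add_apply]; ring
  map_smul' c v := by
    funext k
    simp only [Pi.smul_apply, smul_eq_mul, RingHom.id_apply, zsmul_eq_mul]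
    push_cast
    ring

lemma colSpan_le_ker : colSpan (Mbcc a) ≤ LinearMap.ker (Fmap a) := by
  rintro x ⟨t, rfl⟩
  refine LinearMap.mem_ker.2 (funext fun k => ?_)
  have : ∀ k : Fin 3, ((Mbcc a).mulVecLin t) k.castSucc - ((Mbcc a).mulVecLin t) 3
      = (2 * a : ℕ) * t k.castSucc := by
    intro k
    have h0 : (Fin.castSucc (0:Fin 3) : Fin 4) = 0 := rfl
    have h1 : (Fin.castSucc (1:Fin 3) : Fin 4) = 1 := rfl
    have h2 : (Fin.castSucc (2:Fin 3) : Fin 4) = 2 := rfl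
    fin_cases k <;>
      simp [Mbcc, Matrix.mulVecLin_apply, Matrix.mulVec, dotProduct,
        Fin.sum_univ_four, h0, h1, h2] <;> push_cast <;> ring
  show ((((Mbcc a).mulVecLin t) k.castSucc - ((Mbcc a).mulVecLin t) 3 : ℤ) : ZMod (2*a)) = 0
  rw [this k]
  exact (ZMod.intCast_zmod_eq_zero_iff_dvd _ _).2 ⟨t k.castSucc, by push_cast; ring⟩

def Fbar : LatticeVertex (Mbcc a) →ₗ[ℤ] (Fin 3 → ZMod (2 * a)) :=
  (colSpan (Mbcc a)).liftQ (Fmap a) (colSpan_le_ker a)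

lemma Fbar_mk (v : Fin 4 → ℤ) : Fbar a (Submodule.Quotient.mk v)
    = fun k : Fin 3 => ((v k.castSucc - v 3 : ℤ) : ZMod (2 * a)) :=
  rfl

/-- members of the spanned subgroup have a representative with last coordinate 0. -/
lemma mem_rep {h : LatticeVertex (Mbcc a)}
    (hh : h ∈ AddSubgroup.closure
      ((fun i => (Submodule.Quotient.mk (stdBasis i) : LatticeVertex (Mbcc a))) ''
        {i : Fin 4 | i ≠ 3})) :
    ∃ n : Fin 3 → ℤ, h = Submodule.Quotient.mk ![n 0, n 1, n 2, 0] := by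
  refine AddSubgroup.closure_induction ?_ ?_ ?_ ?_ hh
  · rintro x ⟨i, hi, rfl⟩
    fin_cases i
    · exact ⟨![1,0,0], congrArg Submodule.Quotient.mk
        (funext fun j => by fin_cases j <;> simp [_root_.stdBasis, Pi.single_apply])⟩
    · exact ⟨![0,1,0], congrArg Submodule.Quotient.mk
        (funext fun j => by fin_cases j <;> simp [_root_.stdBasis, Pi.single_apply])⟩
    · exact ⟨![0,0,1], congrArg Submodule.Quotient.mk
        (funext fun j => by fin_cases j <;> simp [_root_.stdBasis, Pi.single_apply])⟩
    · exact absurd rfl hi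
  · refine ⟨0, ((Submodule.Quotient.mk_eq_zero _).2 ?_).symm⟩
    have hz : (![(0:Fin 3 → ℤ) 0, (0:Fin 3 → ℤ) 1, (0:Fin 3 → ℤ) 2, 0] : Fin 4 → ℤ) = 0 := by
      funext j; fin_cases j <;> rfl
    rw [hz]; exact zero_mem _
  · rintro x y _ _ ⟨n, rfl⟩ ⟨m, rfl⟩
    refine ⟨n + m, ?_⟩
    rw [← Submodule.Quotient.mk_add]
    exact congrArg Submodule.Quotient.mk (funext fun j => by fin_cases j <;> simp)
  · rintro x _ ⟨n, rfl⟩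
    refine ⟨-n, ?_⟩
    rw [← Submodule.Quotient.mk_neg]
    exact congrArg Submodule.Quotient.mk (funext fun j => by fin_cases j <;> simp)

lemma rep_mem (n : Fin 3 → ℤ) :
    (Submodule.Quotient.mk ![n 0, n 1, n 2, 0] : LatticeVertex (Mbcc a)) ∈
      AddSubgroup.closure
      ((fun i => (Submodule.Quotient.mk (stdBasis i) : LatticeVertex (Mbcc a))) ''
        {i : Fin 4 | i ≠ 3}) := by
  have : (![n 0, n 1, n 2, 0] : Fin 4 → ℤ)
      = n 0 • stdBasis (0 : Fin 4) + n 1 • stdBasis 1 + n 2 • stdBasis 2 := by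
    funext j; fin_cases j <;> simp [_root_.stdBasis, Pi.single_apply]
  rw [this, Submodule.Quotient.mk_add, Submodule.Quotient.mk_add,
    Submodule.Quotient.mk_smul, Submodule.Quotient.mk_smul, Submodule.Quotient.mk_smul]
  have g : ∀ i : Fin 4, i ≠ 3 → (Submodule.Quotient.mk (stdBasis i) : LatticeVertex (Mbcc a)) ∈
      AddSubgroup.closure ((fun i => (Submodule.Quotient.mk (stdBasis i) :
        LatticeVertex (Mbcc a))) '' {i : Fin 4 | i ≠ 3}) := fun i hi =>
    AddSubgroup.subset_closure ⟨i, hi, rfl⟩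
  exact add_mem (add_mem (zsmul_mem (g 0 (by decide)) _) (zsmul_mem (g 1 (by decide)) _))
    (zsmul_mem (g 2 (by decide)) _)

lemma Fbar_inj {h : LatticeVertex (Mbcc a)}
    (hh : h ∈ AddSubgroup.closure
      ((fun i => (Submodule.Quotient.mk (stdBasis i) : LatticeVertex (Mbcc a))) ''
        {i : Fin 4 | i ≠ 3})) (h0 : Fbar a h = 0) : h = 0 := by
  obtain ⟨n, rfl⟩ := mem_rep a hh
  have key : ∀ k : Fin 3, ((n k : ℤ) : ZMod (2 * a)) = 0 := by
    intro k
    have := congrFun h0 k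
    rw [Fbar_mk] at this
    fin_cases k <;> simpa using this
  have dvd : ∀ k : Fin 3, ∃ m : ℤ, n k = (2 * a : ℕ) * m := by
    intro k
    obtain ⟨m, hm⟩ := (ZMod.intCast_zmod_eq_zero_iff_dvd _ _).1 (key k)
    exact ⟨m, hm⟩
  choose m hm using dvd
  rw [Submodule.Quotient.mk_eq_zero]
  refine ⟨![m 0, m 1, m 2, 0], ?_⟩
  funext j
  fin_cases j <;>
    · simp [Mbcc, Matrix.mulVecLin_apply, Matrix.mulVec, dotProduct, Fin.sum_univ_four,
        hm 0, hm 1, hm 2]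
      try push_cast
      try ring

noncomputable abbrev Hgrp := AddSubgroup.closure
  ((fun i => (Submodule.Quotient.mk (_root_.stdBasis i) : LatticeVertex (Mbcc a))) ''
    {i : Fin 4 | i ≠ 3})

lemma Fbar_injOn {h1 h2 : LatticeVertex (Mbcc a)} (m1 : h1 ∈ Hgrp a) (m2 : h2 ∈ Hgrp a)
    (he : Fbar a h1 = Fbar a h2) : h1 = h2 := by
  have : Fbar a (h1 - h2) = 0 := by rw [map_sub, he, sub_self]
  exact sub_eq_zero.1 (Fbar_inj a (sub_mem m1 m2) this)

lemma castSucc_ne_three (k : Fin 3) : (k.castSucc : Fin 4) ≠ 3 := by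
  intro h
  have hv : (k.castSucc : Fin 4).val = (3 : Fin 4).val := by rw [h]
  rw [Fin.coe_castSucc, show (3 : Fin 4).val = 3 from rfl] at hv
  have := k.isLt
  omega

/-- value of Fbar on a basis vector -/
lemma Fbar_stdBasis (k : Fin 3) :
    Fbar a (Submodule.Quotient.mk (_root_.stdBasis k.castSucc)) = Pi.single k (1 : ZMod (2*a)) := by
  rw [Fbar_mk]
  funext k'
  have h3 : (_root_.stdBasis k.castSucc : Fin 4 → ℤ) 3 = 0 := by
    rw [_root_.stdBasis, Pi.single_apply, if_neg (fun h => castSucc_ne_three k h.symm)]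
  rw [h3, sub_zero, _root_.stdBasis, Pi.single_apply, Pi.single_apply]
  by_cases h : k' = k
  · subst h; simp
  · rw [if_neg (fun hc => h (Fin.castSucc_injective 3 hc)), if_neg h]
    simp

lemma mk_stdBasis_mem (k : Fin 3) :
    (Submodule.Quotient.mk (_root_.stdBasis k.castSucc) : LatticeVertex (Mbcc a)) ∈ Hgrp a :=
  AddSubgroup.subset_closure ⟨k.castSucc, castSucc_ne_three k, rfl⟩

lemma Fbar_rep (n : Fin 3 → ℤ) :
    Fbar a (Submodule.Quotient.mk ![n 0, n 1, n 2, 0])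
      = fun k : Fin 3 => ((n k : ℤ) : ZMod (2 * a)) := by
  rw [Fbar_mk]
  funext k
  have h0 : (Fin.castSucc (0:Fin 3) : Fin 4) = 0 := rfl
  have h1 : (Fin.castSucc (1:Fin 3) : Fin 4) = 1 := rfl
  have h2 : (Fin.castSucc (2:Fin 3) : Fin 4) = 2 := rfl
  fin_cases k <;> simp [h0, h1, h2]

noncomputable def Erep (ha : 0 < a) : (Hgrp a) ≃ (Fin 3 → ZMod (2 * a)) :=
  haveI : NeZero (2 * a) := ⟨by omega⟩
  Equiv.ofBijective (fun h => Fbar a h.1)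
    ⟨fun h1 h2 he => Subtype.ext (Fbar_injOn a h1.2 h2.2 he),
     fun x => ⟨⟨_, rep_mem a (fun k => ((x k).val : ℤ))⟩, by
       show Fbar a (Submodule.Quotient.mk _) = x
       rw [Fbar_rep a (fun k => ((x k).val : ℤ))]
       funext k
       push_cast
       simp [ZMod.natCast_val, ZMod.cast_id]⟩⟩

lemma Erep_apply (ha : 0 < a) (h : Hgrp a) : Erep a ha h = Fbar a h.1 := rfl

lemma diff_iff {v w : LatticeVertex (Mbcc a)} (mv : v ∈ Hgrp a) (mw : w ∈ Hgrp a) (k : Fin 3) :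
    v - w = Submodule.Quotient.mk (_root_.stdBasis k.castSucc) ↔
      Fbar a v - Fbar a w = Pi.single k (1 : ZMod (2 * a)) := by
  constructor
  · intro h
    have := congrArg (Fbar a) h
    rwa [map_sub, Fbar_stdBasis] at this
  · intro h
    refine Fbar_injOn a (sub_mem mv mw) (mk_stdBasis_mem a k) ?_
    rw [map_sub, Fbar_stdBasis, h]

lemma single_iff (x y : Fin 3 → ZMod (2 * a)) (k : Fin 3) :
    ((∀ j, j ≠ k → x j = y j) ∧ (x k = y k + 1 ∨ y k = x k + 1)) ↔
    (x - y = Pi.single k 1 ∨ y - x = Pi.single k 1) := by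
  constructor
  · rintro ⟨hj, hk | hk⟩
    · left
      funext j
      by_cases h : j = k
      · subst h; simp [Pi.sub_apply, hk]
      · simp [Pi.sub_apply, sub_eq_zero.2 (hj j h), Pi.single_apply, h]
    · right
      funext j
      by_cases h : j = k
      · subst h; simp [Pi.sub_apply, hk]
      · simp [Pi.sub_apply, sub_eq_zero.2 (hj j h).symm, Pi.single_apply, h]
  · rintro (h | h)
    · refine ⟨fun j hj => ?_, Or.inl ?_⟩
      · have := congrFun h j
        simp [Pi.sub_apply, Pi.single_apply, hj] at this
        exact sub_eq_zero.1 this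
      · have := congrFun h k
        simp [Pi.sub_apply] at this
        rw [sub_eq_iff_eq_add] at this
        rw [this]; ring
    · refine ⟨fun j hj => ?_, Or.inr ?_⟩
      · have := congrFun h j
        simp [Pi.sub_apply, Pi.single_apply, hj] at this
        exact (sub_eq_zero.1 this).symm
      · have := congrFun h k
        simp [Pi.sub_apply] at this
        rw [sub_eq_iff_eq_add] at this
        rw [this]; ring

lemma exists_castSucc {i : Fin 4} (hi : i ≠ 3) : ∃ k : Fin 3, k.castSucc = i := by
  have h4 := i.isLt
  have h3 : i.val ≠ 3 := fun h => hi (Fin.ext h)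
  exact ⟨⟨i.val, by omega⟩, Fin.ext (by simp [Fin.coe_castSucc])⟩

end BCC

section BCC2
variable (a : ℕ)

noncomputable def bccIso (ha : 0 < a) :
    projGraph (Mbcc a) (3 : Fin 4) ≃g torusGraph (fun _ : Fin 3 => 2 * a) where
  toEquiv := Erep a ha
  map_rel_iff' := by
    intro v w
    constructor
    · rintro ⟨hne, k, hjk, hk⟩
      refine ⟨fun h => hne (by rw [h]), ?_⟩
      rcases (single_iff a (Erep a ha v) (Erep a ha w) k).1 ⟨hjk, hk⟩ with h | h
      · exact ⟨k.castSucc, castSucc_ne_three k, Or.inl ((diff_iff a v.2 w.2 k).2 h)⟩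
      · exact ⟨k.castSucc, castSucc_ne_three k, Or.inr ((diff_iff a w.2 v.2 k).2 h)⟩
    · rintro ⟨hne, i, hi, hd⟩
      obtain ⟨k, rfl⟩ := exists_castSucc hi
      refine ⟨fun h => hne (Subtype.ext (Fbar_injOn a v.2 w.2 h)), k,
        (single_iff a (Erep a ha v) (Erep a ha w) k).2 ?_⟩
      rcases hd with h | h
      · exact Or.inl ((diff_iff a v.2 w.2 k).1 h)
      · exact Or.inr ((diff_iff a w.2 v.2 k).1 h)

end BCC2

section Sym
variable (a : ℕ)

def P0 : Matrix (Fin 4) (Fin 4) ℤ := !![1,0,0,0;0,1,0,0;0,0,1,0;0,0,0,1]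
def P1 : Matrix (Fin 4) (Fin 4) ℤ := !![0,1,0,0;1,0,0,0;0,0,1,0;0,0,0,1]
def P2 : Matrix (Fin 4) (Fin 4) ℤ := !![0,0,1,0;0,1,0,0;1,0,0,0;0,0,0,1]
def P3 : Matrix (Fin 4) (Fin 4) ℤ := !![0,0,0,1;0,1,0,0;0,0,1,0;1,0,0,0]
def Q3 : Matrix (Fin 4) (Fin 4) ℤ := !![-1,0,0,0;-1,1,0,0;-1,0,1,0;2,0,0,1]

lemma sp_P0 : IsSignedPerm P0 := by
  refine ⟨by intro i j; fin_cases i <;> fin_cases j <;> decide, ?_, ?_⟩ <;>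
    (simp only [ExistsUnique]; intro i; fin_cases i <;> decide)
lemma sp_P1 : IsSignedPerm P1 := by
  refine ⟨by intro i j; fin_cases i <;> fin_cases j <;> decide, ?_, ?_⟩ <;>
    (simp only [ExistsUnique]; intro i; fin_cases i <;> decide)
lemma sp_P2 : IsSignedPerm P2 := by
  refine ⟨by intro i j; fin_cases i <;> fin_cases j <;> decide, ?_, ?_⟩ <;>
    (simp only [ExistsUnique]; intro i; fin_cases i <;> decide)
lemma sp_P3 : IsSignedPerm P3 := by
  refine ⟨by intro i j; fin_cases i <;> fin_cases j <;> decide, ?_, ?_⟩ <;>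
    (simp only [ExistsUnique]; intro i; fin_cases i <;> decide)

lemma comm_P0 : P0 * Mbcc a = Mbcc a * P0 := by
  ext i j
  fin_cases i <;> fin_cases j <;>
    · simp [P0, Mbcc, Matrix.mul_apply, Fin.sum_univ_four, Matrix.vecHead, Matrix.vecTail]
      try ring

lemma comm_P1 : P1 * Mbcc a = Mbcc a * P1 := by
  ext i j
  fin_cases i <;> fin_cases j <;>
    · simp [P1, Mbcc, Matrix.mul_apply, Fin.sum_univ_four, Matrix.vecHead, Matrix.vecTail]
      try ring

lemma comm_P2 : P2 * Mbcc a = Mbcc a * P2 := by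
  ext i j
  fin_cases i <;> fin_cases j <;>
    · simp [P2, Mbcc, Matrix.mul_apply, Fin.sum_univ_four, Matrix.vecHead, Matrix.vecTail]
      try ring

lemma comm_P3 : P3 * Mbcc a = Mbcc a * Q3 := by
  ext i j
  fin_cases i <;> fin_cases j <;>
    · simp [P3, Q3, Mbcc, Matrix.mul_apply, Fin.sum_univ_four, Matrix.vecHead, Matrix.vecTail]
      try ring

lemma mulVec_col0 (P : Matrix (Fin 4) (Fin 4) ℤ) :
    P.mulVec (_root_.stdBasis (0 : Fin 4)) = fun j => P j 0 := by
  rw [_root_.stdBasis, Matrix.mulVec_single]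
  funext j; simp

end Sym

/-- `4D-BCC(a)` is linearly symmetric and its projection over `e₄` is the
three-dimensional torus `T(2a,2a,2a)`, i.e. `PC(2a)`. -/
theorem fourD_BCC_symmetric_and_projection (a : ℕ) (ha : 0 < a) :
    IsLinearlySymmetric
      !![(2 * a : ℤ), 0, 0, a; 0, 2 * a, 0, a; 0, 0, 2 * a, a; 0, 0, 0, a] ∧
    Nonempty (projGraph
      !![(2 * a : ℤ), 0, 0, a; 0, 2 * a, 0, a; 0, 0, 2 * a, a; 0, 0, 0, a] (3 : Fin 4) ≃g
      torusGraph ![2 * a, 2 * a, 2 * a]) := by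
  have hM : !![(2 * a : ℤ), 0, 0, a; 0, 2 * a, 0, a; 0, 0, 2 * a, a; 0, 0, 0, a] = Mbcc a := rfl
  rw [hM]
  constructor
  · intro i
    have h0 : (⟨0, i.pos⟩ : Fin 4) = 0 := rfl
    fin_cases i
    · exact ⟨P0, sp_P0, ⟨P0, comm_P0 a⟩, Or.inl (by
        rw [h0, mulVec_col0]
        funext j; fin_cases j <;> simp [P0, _root_.stdBasis, Pi.single_apply, Matrix.vecHead, Matrix.vecTail])⟩
    · exact ⟨P1, sp_P1, ⟨P1, comm_P1 a⟩, Or.inl (by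
        rw [h0, mulVec_col0]
        funext j; fin_cases j <;> simp [P1, _root_.stdBasis, Pi.single_apply, Matrix.vecHead, Matrix.vecTail])⟩
    · exact ⟨P2, sp_P2, ⟨P2, comm_P2 a⟩, Or.inl (by
        rw [h0, mulVec_col0]
        funext j; fin_cases j <;> simp [P2, _root_.stdBasis, Pi.single_apply, Matrix.vecHead, Matrix.vecTail])⟩
    · exact ⟨P3, sp_P3, ⟨Q3, comm_P3 a⟩, Or.inl (by
        rw [h0, mulVec_col0]
        funext j; fin_cases j <;> simp [P3, _root_.stdBasis, Pi.single_apply, Matrix.vecHead, Matrix.vecTail])⟩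
  · have hvec : ![2 * a, 2 * a, 2 * a] = (fun _ : Fin 3 => 2 * a) := by
      funext i; fin_cases i <;> rfl
    rw [hvec]
    exact ⟨bccIso a ha⟩
end

section
/- For every positive integer a, the lattice graph Lip(a), generated by the 4×4 matrix with rows (a,−a,−a,−a),(a,a,−a,a),(a,a,a,−a),(a,−a,a,a), is linearly symmetric, and its projection over e₄ is isomorphic to the face-centered cubic lattice graph FCC(2a); that is, Lip(a) is a symmetric lift of FCC(2a). -/
open Matrix

namespace LipAux

def Mmat (a : ℕ) : Matrix (Fin 4) (Fin 4) ℤ :=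
  !![(a : ℤ), -a, -a, -a; a, a, -a, a; a, a, a, -a; a, -a, a, a]

def Nmat (a : ℕ) : Matrix (Fin 3) (Fin 3) ℤ :=
  !![(2 * a : ℤ), 2 * a, 0; 2 * a, 0, 2 * a; 0, 2 * a, 2 * a]

def Emat : Matrix (Fin 4) (Fin 3) ℤ := !![1,0,0;0,1,0;0,0,1;0,0,0]

def Wmat : Matrix (Fin 4) (Fin 3) ℤ := !![1,1,1;0,0,1;-1,0,0;0,-1,0]

lemma EN_eq (a : ℕ) : Emat * Nmat a = Mmat a * Wmat := by
  ext i j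
  fin_cases i <;> fin_cases j <;>
    simp [Emat, Nmat, Mmat, Wmat, Matrix.mul_apply, Fin.sum_univ_succ] <;> ring

def phi (a : ℕ) : (Fin 3 → ℤ) →ₗ[ℤ] LatticeVertex (Mmat a) :=
  (colSpan (Mmat a)).mkQ ∘ₗ Emat.mulVecLin

lemma le1 (a : ℕ) : colSpan (Nmat a) ≤ LinearMap.ker (phi a) := by
  rintro _ ⟨u, rfl⟩
  simp only [LinearMap.mem_ker, phi, LinearMap.comp_apply, mulVecLin_apply,
    Submodule.mkQ_apply, Submodule.Quotient.mk_eq_zero]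
  rw [Matrix.mulVec_mulVec, EN_eq, ← Matrix.mulVec_mulVec]
  exact ⟨Wmat.mulVec u, rfl⟩

lemma le2 (a : ℕ) (ha : 0 < a) : LinearMap.ker (phi a) ≤ colSpan (Nmat a) := by
  intro v hv
  simp only [LinearMap.mem_ker, phi, LinearMap.comp_apply, mulVecLin_apply,
    Submodule.mkQ_apply, Submodule.Quotient.mk_eq_zero] at hv
  obtain ⟨u, hu⟩ := hv
  have h0 := congrFun hu 0
  have h1 := congrFun hu 1
  have h2 := congrFun hu 2
  have h3 := congrFun hu 3
  simp [Mmat, Emat, Matrix.mulVecLin_apply, Matrix.mulVec, dotProduct,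
    Fin.sum_univ_four, Fin.sum_univ_three] at h0 h1 h2 h3
  have ha' : (a : ℤ) ≠ 0 := by exact_mod_cast ha.ne'
  have rel : u 0 - u 1 + u 2 + u 3 = 0 := by
    rcases mul_eq_zero.1
      (show (a : ℤ) * (u 0 - u 1 + u 2 + u 3) = 0 by linear_combination h3) with h | h
    · exact absurd h ha'
    · exact h
  refine ⟨![-(u 2), -(u 3), u 1], ?_⟩
  funext j
  fin_cases j <;>
    simp [Nmat, Matrix.mulVecLin_apply, Matrix.mulVec, dotProduct,
      Fin.sum_univ_three]
  · linear_combination h0 - (a : ℤ) * rel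
  · linear_combination h1 - (a : ℤ) * rel
  · linear_combination h2 - (a : ℤ) * rel

def psi (a : ℕ) : LatticeVertex (Nmat a) →ₗ[ℤ] LatticeVertex (Mmat a) :=
  Submodule.liftQ _ (phi a) (le1 a)

lemma psi_inj (a : ℕ) (ha : 0 < a) : Function.Injective (psi a) := by
  rw [← LinearMap.ker_eq_bot]
  exact Submodule.ker_liftQ_eq_bot _ _ _ (le2 a ha)

lemma Emat_mulVec_single (i : Fin 3) :
    Emat.mulVec (stdBasis i) = stdBasis (i.castSucc) := by
  funext j
  fin_cases i <;> fin_cases j <;>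
    simp [Emat, _root_.stdBasis, Matrix.mulVec, dotProduct, Fin.sum_univ_three,
      Pi.single_apply]

lemma psi_mk_std (a : ℕ) (i : Fin 3) :
    psi a (Submodule.Quotient.mk (stdBasis i)) =
      Submodule.Quotient.mk (stdBasis (i.castSucc)) := by
  show phi a (stdBasis i) = _
  simp [phi, Emat_mulVec_single]

noncomputable def Tgrp (a : ℕ) : AddSubgroup (LatticeVertex (Mmat a)) :=
  AddSubgroup.closure
    ((fun i => (Submodule.Quotient.mk (stdBasis i) : LatticeVertex (Mmat a))) ''
      {i : Fin 4 | i ≠ 3})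

lemma mem_T (a : ℕ) (i : Fin 4) (hi : i ≠ 3) :
    (Submodule.Quotient.mk (stdBasis i) : LatticeVertex (Mmat a)) ∈ Tgrp a :=
  AddSubgroup.subset_closure ⟨i, hi, rfl⟩

lemma decompE (v : Fin 3 → ℤ) :
    Emat.mulVec v =
      v 0 • stdBasis (0 : Fin 4) + v 1 • stdBasis (1 : Fin 4) + v 2 • stdBasis (2 : Fin 4) := by
  funext j
  fin_cases j <;>
    simp [Emat, _root_.stdBasis, Matrix.mulVec, dotProduct, Fin.sum_univ_three,
      Pi.single_apply]

lemma psi_mem (a : ℕ) (y : LatticeVertex (Nmat a)) : psi a y ∈ Tgrp a := by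
  obtain ⟨v, rfl⟩ := Submodule.Quotient.mk_surjective _ y
  show phi a v ∈ Tgrp a
  have : phi a v = v 0 • Submodule.Quotient.mk (stdBasis (0 : Fin 4)) +
      v 1 • Submodule.Quotient.mk (stdBasis (1 : Fin 4)) +
      v 2 • Submodule.Quotient.mk (stdBasis (2 : Fin 4)) := by
    simp only [phi, LinearMap.comp_apply, mulVecLin_apply, Submodule.mkQ_apply, decompE,
      Submodule.Quotient.mk_add, Submodule.Quotient.mk_smul]
  rw [this]
  refine add_mem (add_mem ?_ ?_) ?_ <;>
    exact AddSubgroup.zsmul_mem _ (mem_T a _ (by decide)) _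

lemma psi_surj (a : ℕ) (x : Tgrp a) : ∃ y, psi a y = (x : LatticeVertex (Mmat a)) := by
  have hle : Tgrp a ≤ (LinearMap.range (psi a)).toAddSubgroup := by
    rw [Tgrp, AddSubgroup.closure_le]
    rintro _ ⟨i, hi, rfl⟩
    fin_cases i
    · exact ⟨Submodule.Quotient.mk (stdBasis (0 : Fin 3)), psi_mk_std a 0⟩
    · exact ⟨Submodule.Quotient.mk (stdBasis (1 : Fin 3)), psi_mk_std a 1⟩
    · exact ⟨Submodule.Quotient.mk (stdBasis (2 : Fin 3)), psi_mk_std a 2⟩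
    · exact absurd rfl hi
  exact hle x.2

lemma key_iff (a : ℕ) (ha : 0 < a) (x : LatticeVertex (Nmat a)) (i : Fin 3) :
    x = Submodule.Quotient.mk (stdBasis i) ↔
      psi a x = Submodule.Quotient.mk (stdBasis i.castSucc) := by
  rw [← psi_mk_std]
  exact ⟨fun h => by rw [h], fun h => psi_inj a ha h⟩


def P0 : Matrix (Fin 4) (Fin 4) ℤ := !![1,0,0,0;0,1,0,0;0,0,1,0;0,0,0,1]
def P1 : Matrix (Fin 4) (Fin 4) ℤ := !![0,1,0,0;1,0,0,0;0,0,1,0;0,0,0,1]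
def Q1 : Matrix (Fin 4) (Fin 4) ℤ := !![1,0,0,0;0,0,0,-1;0,0,1,0;0,-1,0,0]
def P2 : Matrix (Fin 4) (Fin 4) ℤ := !![0,1,0,0;0,0,1,0;1,0,0,0;0,0,0,1]
def Q2 : Matrix (Fin 4) (Fin 4) ℤ := !![1,0,0,0;0,0,0,-1;0,-1,0,0;0,0,1,0]
def P3 : Matrix (Fin 4) (Fin 4) ℤ := !![0,1,0,0;0,0,1,0;0,0,0,1;1,0,0,0]
def Q3 : Matrix (Fin 4) (Fin 4) ℤ := !![1,0,0,0;0,0,1,0;0,-1,0,0;0,0,0,-1]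

lemma euRow {n : ℕ} (P : Matrix (Fin n) (Fin n) ℤ) (σ : Fin n → Fin n)
    (h : ∀ i j, P i j ≠ 0 ↔ j = σ i) (i : Fin n) : ∃! j, P i j ≠ 0 :=
  ⟨σ i, (h i (σ i)).2 rfl, fun y hy => (h i y).1 hy⟩

lemma euCol {n : ℕ} (P : Matrix (Fin n) (Fin n) ℤ) (τ : Fin n → Fin n)
    (h : ∀ i j, P i j ≠ 0 ↔ i = τ j) (j : Fin n) : ∃! i, P i j ≠ 0 :=
  ⟨τ j, (h (τ j) j).2 rfl, fun y hy => (h y j).1 hy⟩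

lemma sp0 : IsSignedPerm P0 :=
  ⟨by intro i; fin_cases i <;> decide, euRow _ ![0,1,2,3] (by intro i; fin_cases i <;> decide),
    euCol _ ![0,1,2,3] (by intro i; fin_cases i <;> decide)⟩
lemma sp1 : IsSignedPerm P1 :=
  ⟨by intro i; fin_cases i <;> decide, euRow _ ![1,0,2,3] (by intro i; fin_cases i <;> decide),
    euCol _ ![1,0,2,3] (by intro i; fin_cases i <;> decide)⟩
lemma sp2 : IsSignedPerm P2 :=
  ⟨by intro i; fin_cases i <;> decide, euRow _ ![1,2,0,3] (by intro i; fin_cases i <;> decide),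
    euCol _ ![2,0,1,3] (by intro i; fin_cases i <;> decide)⟩
lemma sp3 : IsSignedPerm P3 :=
  ⟨by intro i; fin_cases i <;> decide, euRow _ ![1,2,3,0] (by intro i; fin_cases i <;> decide),
    euCol _ ![3,0,1,2] (by intro i; fin_cases i <;> decide)⟩

lemma pm0 (a : ℕ) : P0 * Mmat a = Mmat a * P0 := by
  apply Matrix.ext
  intro i j
  fin_cases i <;> fin_cases j <;>
    simp [P0, Mmat, Matrix.mul_apply, Fin.sum_univ_four, Matrix.vecHead, Matrix.vecTail]
lemma pm1 (a : ℕ) : P1 * Mmat a = Mmat a * Q1 := by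
  apply Matrix.ext
  intro i j
  fin_cases i <;> fin_cases j <;>
    simp [P1, Q1, Mmat, Matrix.mul_apply, Fin.sum_univ_four, Matrix.vecHead,
      Matrix.vecTail]
lemma pm2 (a : ℕ) : P2 * Mmat a = Mmat a * Q2 := by
  apply Matrix.ext
  intro i j
  fin_cases i <;> fin_cases j <;>
    simp [P2, Q2, Mmat, Matrix.mul_apply, Fin.sum_univ_four, Matrix.vecHead,
      Matrix.vecTail]
lemma pm3 (a : ℕ) : P3 * Mmat a = Mmat a * Q3 := by
  apply Matrix.ext
  intro i j
  fin_cases i <;> fin_cases j <;>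
    simp [P3, Q3, Mmat, Matrix.mul_apply, Fin.sum_univ_four, Matrix.vecHead,
      Matrix.vecTail]

lemma castSucc_ne_three (i : Fin 3) : (Fin.castSucc i : Fin 4) ≠ 3 := by
  fin_cases i <;> decide

lemma exists_castSucc (i : Fin 4) (hi : i ≠ 3) : ∃ j : Fin 3, Fin.castSucc j = i := by
  fin_cases i
  · exact ⟨0, rfl⟩
  · exact ⟨1, rfl⟩
  · exact ⟨2, rfl⟩
  · exact absurd rfl hi

noncomputable def theEquiv (a : ℕ) (ha : 0 < a) :
    LatticeVertex (Nmat a) ≃ Tgrp a :=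
  Equiv.ofBijective (fun y => ⟨psi a y, psi_mem a y⟩)
    ⟨fun x y h => psi_inj a ha (congrArg Subtype.val h),
     fun x => (psi_surj a x).imp fun y hy => Subtype.ext hy⟩

noncomputable def theIso (a : ℕ) (ha : 0 < a) :
    latticeGraph (Nmat a) ≃g projGraph (Mmat a) (3 : Fin 4) :=
  { theEquiv a ha with
    map_rel_iff' := by
      intro v w
      constructor
      · rintro ⟨hne, i, hiS, h⟩
        obtain ⟨i3, rfl⟩ := exists_castSucc i hiS
        refine ⟨fun hvw => hne (by rw [hvw]), i3, ?_⟩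
        rcases h with h | h
        · exact Or.inl ((key_iff a ha _ i3).2 (by rw [map_sub]; exact h))
        · exact Or.inr ((key_iff a ha _ i3).2 (by rw [map_sub]; exact h))
      · rintro ⟨hne, i, h⟩
        refine ⟨fun hsub => hne (psi_inj a ha (congrArg Subtype.val hsub)),
          i.castSucc, castSucc_ne_three i, ?_⟩
        rcases h with h | h
        · refine Or.inl ?_
          have := (key_iff a ha (v - w) i).1 h
          rwa [map_sub] at this
        · refine Or.inr ?_
          have := (key_iff a ha (w - v) i).1 h
          rwa [map_sub] at this }

end LipAux


/-- `Lip(a)` is linearly symmetric and its projection over `e₄` is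
isomorphic to `FCC(2a)`: `Lip(a)` is a symmetric lift of `FCC(2a)`. -/
theorem Lip_symmetric_lift_of_FCC (a : ℕ) (ha : 0 < a) :
    IsLinearlySymmetric
      !![(a : ℤ), -a, -a, -a; a, a, -a, a; a, a, a, -a; a, -a, a, a] ∧
    Nonempty (projGraph
      !![(a : ℤ), -a, -a, -a; a, a, -a, a; a, a, a, -a; a, -a, a, a] (3 : Fin 4) ≃g
      latticeGraph !![(2 * a : ℤ), 2 * a, 0; 2 * a, 0, 2 * a; 0, 2 * a, 2 * a]) := by
  refine ⟨?_, ⟨(LipAux.theIso a ha).symm⟩⟩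
  intro i
  fin_cases i
  · exact ⟨LipAux.P0, LipAux.sp0, ⟨LipAux.P0, LipAux.pm0 a⟩,
      Or.inl (by funext j; fin_cases j <;> decide)⟩
  · exact ⟨LipAux.P1, LipAux.sp1, ⟨LipAux.Q1, LipAux.pm1 a⟩,
      Or.inl (by funext j; fin_cases j <;> decide)⟩
  · exact ⟨LipAux.P2, LipAux.sp2, ⟨LipAux.Q2, LipAux.pm2 a⟩,
      Or.inl (by funext j; fin_cases j <;> decide)⟩
  · exact ⟨LipAux.P3, LipAux.sp3, ⟨LipAux.Q3, LipAux.pm3 a⟩,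
      Or.inl (by funext j; fin_cases j <;> decide)⟩
end

section
/- Let C ∈ ℤ^{k×k}, A ∈ ℤ^{p×p}, B ∈ ℤ^{q×q} be nonsingular, and let R_A ∈ ℤ^{k×p}, R_B ∈ ℤ^{k×q}. Let W ∈ ℤ^{(k+p+q)×(k+p+q)} be the block matrix with block rows (C, R_A, R_B), (0, A, 0), (0, 0, B), and set M₁ = [[C,R_A],[0,A]] and M₂ = [[C,R_B],[0,B]]. Then W is nonsingular, the subgraph of 𝒢(W) spanned by {1,…,k+p} is isomorphic to 𝒢(M₁), and the subgraph of 𝒢(W) spanned by {1,…,k} ∪ {k+p+1,…,k+p+q} is isomorphic to 𝒢(M₂); hence 𝒢(W) is a common lift of 𝒢(M₁) and 𝒢(M₂), and its dimension k+p+q satisfies max(k+p, k+q) ≤ k+p+q ≤ (k+p)+(k+q). -/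
open Matrix

section Lift
set_option linter.unusedSectionVars false
variable {α β γ : Type*} [Fintype α] [DecidableEq α] [Fintype β] [DecidableEq β]
  [Fintype γ] [DecidableEq γ]

private def extMap (e : α ⊕ γ ≃ β) : (α → ℤ) →ₗ[ℤ] (β → ℤ) where
  toFun v := fun b => Sum.elim v 0 (e.symm b)
  map_add' u v := by funext b; rcases h : e.symm b with a | g <;> simp [h]
  map_smul' c v := by funext b; rcases h : e.symm b with a | g <;> simp [h]

private lemma extMap_apply (e : α ⊕ γ ≃ β) (v : α → ℤ) (x : α ⊕ γ) :
    extMap e v (e x) = Sum.elim v 0 x := by simp [extMap]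

private lemma extMap_stdBasis (e : α ⊕ γ ≃ β) (a : α) :
    extMap e (stdBasis a) = stdBasis (e (Sum.inl a)) := by
  funext b
  rcases h : e.symm b with a' | g <;>
    rw [(Equiv.symm_apply_eq e).mp h] <;>
    simp [extMap, _root_.stdBasis, Pi.single_apply, e.injective.eq_iff]

private lemma mulVec_sum_split (e : α ⊕ γ ≃ β) (W : Matrix β β ℤ) (x : β → ℤ) (b : β) :
    W.mulVec x b = (∑ a, W b (e (Sum.inl a)) * x (e (Sum.inl a)))
      + ∑ g, W b (e (Sum.inr g)) * x (e (Sum.inr g)) := by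
  have h1 : W.mulVec x b = ∑ c, W b c * x c := rfl
  rw [h1, ← Equiv.sum_comp e (fun c => W b c * x c), Fintype.sum_sum_type]

private lemma extMap_mulVec (e : α ⊕ γ ≃ β) (M : Matrix α α ℤ) (W : Matrix β β ℤ)
    (H1 : ∀ i j, W (e (Sum.inl i)) (e (Sum.inl j)) = M i j)
    (H2 : ∀ c j, W (e (Sum.inr c)) (e (Sum.inl j)) = 0)
    (v : α → ℤ) : W.mulVec (extMap e v) = extMap e (M.mulVec v) := by
  funext b
  rw [mulVec_sum_split e]
  rcases h : e.symm b with i | c <;> rw [(Equiv.symm_apply_eq e).mp h]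
  · simp only [extMap_apply, Sum.elim_inl, Sum.elim_inr, Pi.zero_apply, mul_zero,
      Finset.sum_const_zero, add_zero, H1]
    rfl
  · simp [extMap_apply, H2]

private lemma extMap_mem_colSpan (e : α ⊕ γ ≃ β) (M : Matrix α α ℤ) (W : Matrix β β ℤ)
    (H1 : ∀ i j, W (e (Sum.inl i)) (e (Sum.inl j)) = M i j)
    (H2 : ∀ c j, W (e (Sum.inr c)) (e (Sum.inl j)) = 0)
    (hN : (Matrix.of fun c d : γ => W (e (Sum.inr c)) (e (Sum.inr d))).det ≠ 0)
    (v : α → ℤ) (h : extMap e v ∈ colSpan W) : v ∈ colSpan M := by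
  obtain ⟨x, hx⟩ := h
  simp only [Matrix.mulVecLin_apply] at hx
  set y : γ → ℤ := fun c => x (e (Sum.inr c)) with hy_def
  have hy : y = 0 := by
    apply Matrix.eq_zero_of_mulVec_eq_zero hN
    funext c
    have h1 := congrFun hx (e (Sum.inr c))
    rw [mulVec_sum_split e, extMap_apply] at h1
    simp only [H2, zero_mul, Finset.sum_const_zero, zero_add, Sum.elim_inr, Pi.zero_apply] at h1
    simpa [Matrix.mulVec, dotProduct, hy_def] using h1
  refine ⟨fun a => x (e (Sum.inl a)), ?_⟩
  simp only [Matrix.mulVecLin_apply]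
  funext i
  have h1 := congrFun hx (e (Sum.inl i))
  rw [mulVec_sum_split e, extMap_apply] at h1
  have hzero : ∀ g, x (e (Sum.inr g)) = 0 := fun g => congrFun hy g
  simp only [hzero, mul_zero, Finset.sum_const_zero, add_zero, H1, Sum.elim_inl] at h1
  simpa [Matrix.mulVec, dotProduct] using h1

private lemma spanned_iso_general (e : α ⊕ γ ≃ β) (M : Matrix α α ℤ) (W : Matrix β β ℤ)
    (H1 : ∀ i j, W (e (Sum.inl i)) (e (Sum.inl j)) = M i j)
    (H2 : ∀ c j, W (e (Sum.inr c)) (e (Sum.inl j)) = 0)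
    (hN : (Matrix.of fun c d : γ => W (e (Sum.inr c)) (e (Sum.inr d))).det ≠ 0)
    (S : Set β) (hS : S = Set.range (fun a : α => e (Sum.inl a))) :
    Nonempty (spannedSubgraph W S ≃g latticeGraph M) := by
  subst hS
  have hle : colSpan M ≤ (colSpan W).comap (extMap e) := by
    rintro _ ⟨u, rfl⟩
    refine Submodule.mem_comap.mpr ⟨extMap e u, ?_⟩
    simpa using (extMap_mulVec e M W H1 H2 u)
  let ψ : LatticeVertex M →ₗ[ℤ] LatticeVertex W :=
    Submodule.mapQ (colSpan M) (colSpan W) (extMap e) hle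
  have hψmk : ∀ v : α → ℤ,
      ψ (Submodule.Quotient.mk v) = Submodule.Quotient.mk (extMap e v) := fun v => rfl
  have hψinj : Function.Injective ψ := by
    rw [injective_iff_map_eq_zero]
    intro v0 hv0
    obtain ⟨v, rfl⟩ := Submodule.Quotient.mk_surjective _ v0
    rw [hψmk, Submodule.Quotient.mk_eq_zero] at hv0
    rw [Submodule.Quotient.mk_eq_zero]
    exact extMap_mem_colSpan e M W H1 H2 hN v hv0
  set K := AddSubgroup.closure
      ((fun i => (Submodule.Quotient.mk (stdBasis i) : LatticeVertex W)) ''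
        Set.range (fun a : α => e (Sum.inl a))) with hK
  have hgen : ∀ a : α, ψ (Submodule.Quotient.mk (stdBasis a)) =
      Submodule.Quotient.mk (stdBasis (e (Sum.inl a))) := by
    intro a; rw [hψmk, extMap_stdBasis]
  have hgenK : ∀ a : α,
      (Submodule.Quotient.mk (stdBasis (e (Sum.inl a))) : LatticeVertex W) ∈ K := by
    intro a
    exact AddSubgroup.subset_closure ⟨e (Sum.inl a), ⟨a, rfl⟩, rfl⟩
  have hmem : ∀ v : LatticeVertex M, ψ v ∈ K := by
    intro v0
    obtain ⟨v, rfl⟩ := Submodule.Quotient.mk_surjective _ v0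
    have hv : (Submodule.Quotient.mk v : LatticeVertex M)
        = ∑ a, v a • Submodule.Quotient.mk (stdBasis a) := by
      have hv2 : v = ∑ a, v a • stdBasis a := by
        funext a'
        simp [_root_.stdBasis, Pi.single_apply, mul_ite]
      calc (Submodule.Quotient.mk v : LatticeVertex M)
          = Submodule.Quotient.mk (∑ a, v a • stdBasis a) := by rw [← hv2]
        _ = (colSpan M).mkQ (∑ a, v a • stdBasis a) := rfl
        _ = ∑ a, v a • Submodule.Quotient.mk (stdBasis a) := by
            rw [map_sum]
            exact Finset.sum_congr rfl fun a _ => Submodule.Quotient.mk_smul _ _ _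
    rw [hv, map_sum]
    refine sum_mem fun a _ => ?_
    rw [LinearMap.map_smul]
    exact AddSubgroup.zsmul_mem K (by rw [hgen]; exact hgenK a) _
  have hsurj : ∀ x : LatticeVertex W, x ∈ K → ∃ v, ψ v = x := by
    have hle2 : K ≤ AddMonoidHom.range ψ.toAddMonoidHom := by
      rw [hK, AddSubgroup.closure_le]
      rintro _ ⟨_, ⟨a, rfl⟩, rfl⟩
      exact ⟨Submodule.Quotient.mk (stdBasis a), hgen a⟩
    intro x hx
    exact hle2 hx
  let f : LatticeVertex M → K := fun v => ⟨ψ v, hmem v⟩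
  have hfbij : Function.Bijective f := by
    constructor
    · intro v w h
      exact hψinj (congrArg Subtype.val h)
    · rintro ⟨x, hx⟩
      obtain ⟨v, hv⟩ := hsurj x hx
      exact ⟨v, Subtype.ext hv⟩
  have hne_iff : ∀ v w : LatticeVertex M, f v ≠ f w ↔ v ≠ w := by
    intro v w
    constructor
    · intro h hvw; exact h (by rw [hvw])
    · intro h hc; exact h (hfbij.1 hc)
  have key : ∀ v w : LatticeVertex M,
      (spannedSubgraph W (Set.range (fun a : α => e (Sum.inl a)))).Adj (f v) (f w)
        ↔ (latticeGraph M).Adj v w := by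
    intro v w
    constructor
    · rintro ⟨hne, i, ⟨a, rfl⟩, hi⟩
      refine ⟨(hne_iff v w).mp hne, a, ?_⟩
      have hcoe1 : ((f v : K) : LatticeVertex W) = ψ v := rfl
      have hcoe2 : ((f w : K) : LatticeVertex W) = ψ w := rfl
      rw [hcoe1, hcoe2, ← map_sub, ← map_sub, ← hgen a] at hi
      rcases hi with hi | hi
      · exact Or.inl (hψinj hi)
      · exact Or.inr (hψinj hi)
    · rintro ⟨hne, a, ha⟩
      refine ⟨(hne_iff v w).mpr hne, e (Sum.inl a), ⟨a, rfl⟩, ?_⟩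
      have hcoe1 : ((f v : K) : LatticeVertex W) = ψ v := rfl
      have hcoe2 : ((f w : K) : LatticeVertex W) = ψ w := rfl
      rw [hcoe1, hcoe2, ← map_sub, ← map_sub, ← hgen a]
      rcases ha with ha | ha
      · exact Or.inl (congrArg ψ ha)
      · exact Or.inr (congrArg ψ ha)
  exact ⟨(RelIso.mk (Equiv.ofBijective f hfbij) (fun {v w} => key v w)).symm⟩

end Lift

private def swapEquiv (k p q : ℕ) : (Fin k ⊕ Fin q) ⊕ Fin p ≃ Fin k ⊕ (Fin p ⊕ Fin q) where
  toFun := Sum.elim (Sum.elim Sum.inl (Sum.inr ∘ Sum.inr)) (Sum.inr ∘ Sum.inl)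
  invFun := Sum.elim (Sum.inl ∘ Sum.inl) (Sum.elim Sum.inr (Sum.inl ∘ Sum.inr))
  left_inv := by rintro ((i|j)|c) <;> rfl
  right_inv := by rintro (i|(c|j)) <;> rfl

/-- the block matrix `W = [[C,R_A,R_B],[0,A,0],[0,0,B]]` is nonsingular and
`𝒢(W)` is a common lift of `𝒢([[C,R_A],[0,A]])` and `𝒢([[C,R_B],[0,B]])`, of dimension
`k+p+q` with `max(k+p,k+q) ≤ k+p+q ≤ (k+p)+(k+q)`. -/
theorem common_lift_construction {k p q : ℕ}
    (C : Matrix (Fin k) (Fin k) ℤ) (A : Matrix (Fin p) (Fin p) ℤ)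
    (B : Matrix (Fin q) (Fin q) ℤ)
    (RA : Matrix (Fin k) (Fin p) ℤ) (RB : Matrix (Fin k) (Fin q) ℤ)
    (hC : C.det ≠ 0) (hA : A.det ≠ 0) (hB : B.det ≠ 0) :
    (Matrix.fromBlocks C (Matrix.of fun i j => Sum.elim (RA i) (RB i) j) 0
        (Matrix.fromBlocks A 0 0 B)).det ≠ 0 ∧
    Nonempty (spannedSubgraph
      (Matrix.fromBlocks C (Matrix.of fun i j => Sum.elim (RA i) (RB i) j) 0
        (Matrix.fromBlocks A 0 0 B))
      (Set.range Sum.inl ∪ Set.range (Sum.inr ∘ Sum.inl)) ≃g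
      latticeGraph (Matrix.fromBlocks C RA 0 A)) ∧
    Nonempty (spannedSubgraph
      (Matrix.fromBlocks C (Matrix.of fun i j => Sum.elim (RA i) (RB i) j) 0
        (Matrix.fromBlocks A 0 0 B))
      (Set.range Sum.inl ∪ Set.range (Sum.inr ∘ Sum.inr)) ≃g
      latticeGraph (Matrix.fromBlocks C RB 0 B)) ∧
    (max (k + p) (k + q) ≤ k + p + q ∧ k + p + q ≤ (k + p) + (k + q)) := by
  set W := Matrix.fromBlocks C (Matrix.of fun i j => Sum.elim (RA i) (RB i) j) 0
      (Matrix.fromBlocks A 0 0 B) with hW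
  refine ⟨?_, ?_, ?_, ?_, ?_⟩
  · rw [hW, Matrix.det_fromBlocks_zero₂₁, Matrix.det_fromBlocks_zero₂₁]
    exact mul_ne_zero hC (mul_ne_zero hA hB)
  · refine spanned_iso_general (Equiv.sumAssoc (Fin k) (Fin p) (Fin q))
      (Matrix.fromBlocks C RA 0 A) W ?_ ?_ ?_ _ ?_
    · rintro (i|i) (j|j) <;> simp [hW]
    · rintro c (j|j) <;> simp [hW]
    · have hEq : (Matrix.of fun c d : Fin q =>
          W (Equiv.sumAssoc (Fin k) (Fin p) (Fin q) (Sum.inr c))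
            (Equiv.sumAssoc (Fin k) (Fin p) (Fin q) (Sum.inr d))) = B := by
        ext c d; simp [hW]
      rw [hEq]; exact hB
    · ext x
      constructor
      · rintro (⟨i, rfl⟩|⟨j, rfl⟩)
        · exact ⟨Sum.inl i, rfl⟩
        · exact ⟨Sum.inr j, rfl⟩
      · rintro ⟨(i|j), rfl⟩
        · exact Or.inl ⟨i, rfl⟩
        · exact Or.inr ⟨j, rfl⟩
  · refine spanned_iso_general (swapEquiv k p q)
      (Matrix.fromBlocks C RB 0 B) W ?_ ?_ ?_ _ ?_
    · rintro (i|i) (j|j) <;> simp [hW, swapEquiv]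
    · rintro c (j|j) <;> simp [hW, swapEquiv]
    · have hEq : (Matrix.of fun c d : Fin p =>
          W (swapEquiv k p q (Sum.inr c)) (swapEquiv k p q (Sum.inr d))) = A := by
        ext c d; simp [hW, swapEquiv]
      rw [hEq]; exact hA
    · ext x
      constructor
      · rintro (⟨i, rfl⟩|⟨j, rfl⟩)
        · exact ⟨Sum.inl i, rfl⟩
        · exact ⟨Sum.inr j, rfl⟩
      · rintro ⟨(i|j), rfl⟩
        · exact Or.inl ⟨i, rfl⟩
        · exact Or.inr ⟨j, rfl⟩
  · omega
  · omega
end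

section
/- Let M ∈ ℤ^{n×n} be nonsingular. If the lattice graph 𝒢(M) is linearly symmetric, then 𝒢(M) is symmetric, i.e., it is both vertex-transitive and edge-transitive. -/
open Matrix

section AuxProof

variable {n : ℕ}

/-- The lattice graph adjacency, unfolded. -/
lemma latticeGraph_adj {ι : Type*} [Fintype ι] [DecidableEq ι] (M : Matrix ι ι ℤ)
    (v w : LatticeVertex M) :
    (latticeGraph M).Adj v w ↔ v ≠ w ∧ ∃ i : ι,
      v - w = Submodule.Quotient.mk (_root_.stdBasis i) ∨
      w - v = Submodule.Quotient.mk (_root_.stdBasis i) := Iff.rfl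

/-- Translation automorphism of the lattice graph. -/
noncomputable def transIso {ι : Type*} [Fintype ι] [DecidableEq ι] (M : Matrix ι ι ℤ)
    (a : LatticeVertex M) :
    latticeGraph M ≃g latticeGraph M where
  toEquiv := Equiv.addRight a
  map_rel_iff' := by
    intro v w
    simp only [Equiv.coe_addRight, latticeGraph_adj, add_sub_add_right_eq_sub, ne_eq,
      add_left_inj]

/-- Negation automorphism of the lattice graph. -/
noncomputable def negIso {ι : Type*} [Fintype ι] [DecidableEq ι] (M : Matrix ι ι ℤ) :
    latticeGraph M ≃g latticeGraph M where
  toEquiv := Equiv.neg _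
  map_rel_iff' := by
    intro v w
    simp only [Equiv.neg_apply, latticeGraph_adj, neg_sub_neg, ne_eq, neg_inj]
    constructor
    · rintro ⟨hne, i, h⟩; exact ⟨hne, i, h.symm⟩
    · rintro ⟨hne, i, h⟩; exact ⟨hne, i, h.symm⟩

lemma signedPerm_col {P : Matrix (Fin n) (Fin n) ℤ} (hP : IsSignedPerm P) {i j : Fin n}
    (hij : P i j ≠ 0) :
    P.mulVec (_root_.stdBasis j) = _root_.stdBasis i ∨
      P.mulVec (_root_.stdBasis j) = -_root_.stdBasis i := by
  have hcol : P.mulVec (_root_.stdBasis j) = fun k => P k j := by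
    show P.mulVec (Pi.single j 1) = _
    rw [Matrix.mulVec_single]; simp; rfl
  obtain ⟨i0, hi0, hu⟩ := hP.2.2 j
  have hii : ∀ k, k ≠ i → P k j = 0 := fun k hk => by
    by_contra h; exact hk ((hu k h).trans (hu i hij).symm)
  have hfun : (fun k => P k j) = Pi.single i (P i j) := funext fun k => by
    by_cases hk : k = i
    · subst hk; simp
    · rw [Pi.single_eq_of_ne hk, hii k hk]
  rcases hP.1 i j with h | h | h
  · exact absurd h hij
  · left; rw [hcol, hfun, h]; rfl
  · right; rw [hcol, hfun, h]
    show Pi.single i (-(1:ℤ)) = -_root_.stdBasis i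
    rw [Pi.single_neg]; rfl

lemma signedPerm_col_exists {P : Matrix (Fin n) (Fin n) ℤ} (hP : IsSignedPerm P) (j : Fin n) :
    ∃ i, P.mulVec (_root_.stdBasis j) = _root_.stdBasis i ∨
      P.mulVec (_root_.stdBasis j) = -_root_.stdBasis i := by
  obtain ⟨i, hi, -⟩ := hP.2.2 j
  exact ⟨i, signedPerm_col hP hi⟩

lemma signedPerm_col_surj {P : Matrix (Fin n) (Fin n) ℤ} (hP : IsSignedPerm P) (i : Fin n) :
    ∃ j, P.mulVec (_root_.stdBasis j) = _root_.stdBasis i ∨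
      P.mulVec (_root_.stdBasis j) = -_root_.stdBasis i := by
  obtain ⟨j, hj, -⟩ := hP.2.1 i
  exact ⟨j, signedPerm_col hP hj⟩

lemma signedPerm_mul_transpose {P : Matrix (Fin n) (Fin n) ℤ} (hP : IsSignedPerm P) :
    P * Pᵀ = 1 ∧ Pᵀ * P = 1 := by
  obtain ⟨h01, hrow, hcol⟩ := hP
  constructor
  · ext i k
    rw [Matrix.mul_apply, Matrix.one_apply]
    simp only [Matrix.transpose_apply]
    by_cases hik : i = k
    · subst hik
      rw [if_pos rfl]
      obtain ⟨j0, hj0, hu⟩ := hrow i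
      rw [Finset.sum_eq_single j0 (fun b _ hb => by
        have : P i b = 0 := by by_contra h; exact hb (hu b h)
        rw [this, zero_mul]) (fun h => absurd (Finset.mem_univ j0) h)]
      rcases h01 i j0 with h | h | h
      · exact absurd h hj0
      · rw [h]; norm_num
      · rw [h]; norm_num
    · rw [if_neg hik]
      apply Finset.sum_eq_zero
      intro j _
      by_cases h1 : P i j = 0
      · rw [h1, zero_mul]
      by_cases h2 : P k j = 0
      · rw [h2, mul_zero]
      obtain ⟨i0, _, hu⟩ := hcol j
      exact absurd ((hu i h1).trans (hu k h2).symm) hik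
  · ext a b
    rw [Matrix.mul_apply, Matrix.one_apply]
    simp only [Matrix.transpose_apply]
    by_cases hab : a = b
    · subst hab
      rw [if_pos rfl]
      obtain ⟨i0, hi0, hu⟩ := hcol a
      rw [Finset.sum_eq_single i0 (fun c _ hc => by
        have : P c a = 0 := by by_contra h; exact hc (hu c h)
        rw [this, zero_mul]) (fun h => absurd (Finset.mem_univ i0) h)]
      rcases h01 i0 a with h | h | h
      · exact absurd h hi0
      · rw [h]; norm_num
      · rw [h]; norm_num
    · rw [if_neg hab]
      apply Finset.sum_eq_zero
      intro i _
      by_cases h1 : P i a = 0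
      · rw [h1, zero_mul]
      by_cases h2 : P i b = 0
      · rw [h2, mul_zero]
      obtain ⟨j0, _, hu⟩ := hrow i
      exact absurd ((hu a h1).trans (hu b h2).symm) hab

/-- A signed permutation matrix commuting with `M` induces a graph automorphism. -/
lemma exists_permIso {M P Q : Matrix (Fin n) (Fin n) ℤ} (hM : M.det ≠ 0)
    (hP : IsSignedPerm P) (hPQ : P * M = M * Q) :
    ∃ ψ : latticeGraph M ≃g latticeGraph M, ∀ x : Fin n → ℤ,
      ψ (Submodule.Quotient.mk x) = Submodule.Quotient.mk (P.mulVec x) := by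
  obtain ⟨hPt1, hPt2⟩ := signedPerm_mul_transpose hP
  have invP : Invertible P := ⟨Pᵀ, hPt2, hPt1⟩
  set eP := P.toLinearEquiv' invP with heP
  have heP_apply : ∀ x, eP x = P.mulVec x := fun x => by
    rw [heP]
    show (P.toLinearEquiv' invP : (Fin n → ℤ) →ₗ[ℤ] (Fin n → ℤ)) x = _
    rw [Matrix.toLinearEquiv'_apply]
    exact Matrix.toLin'_apply P x
  -- Q is invertible
  have hPd : IsUnit P.det := P.isUnit_det_of_invertible
  have hdet : M.det * Q.det = M.det * P.det := by
    rw [← Matrix.det_mul, ← hPQ, Matrix.det_mul, mul_comm]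
  have hQd : IsUnit Q.det := by
    rw [mul_left_cancel₀ hM hdet]; exact hPd
  have invQ : Invertible Q := Q.invertibleOfIsUnitDet hQd
  set eQ := Q.toLinearEquiv' invQ with heQ
  have heQ_apply : ∀ x, eQ x = Q.mulVec x := fun x => by
    rw [heQ]
    show (Q.toLinearEquiv' invQ : (Fin n → ℤ) →ₗ[ℤ] (Fin n → ℤ)) x = _
    rw [Matrix.toLinearEquiv'_apply]
    exact Matrix.toLin'_apply Q x
  have hmap : Submodule.map (eP : (Fin n → ℤ) →ₗ[ℤ] (Fin n → ℤ)) (colSpan M) = colSpan M := by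
    apply le_antisymm
    · rintro y hy
      rw [Submodule.mem_map] at hy
      obtain ⟨z, hz, rfl⟩ := hy
      obtain ⟨x, hx⟩ := hz
      refine ⟨Q.mulVec x, ?_⟩
      show M.mulVec (Q.mulVec x) = eP z
      rw [heP_apply, ← hx]
      show M.mulVec (Q.mulVec x) = P.mulVec (M.mulVec x)
      rw [Matrix.mulVec_mulVec, Matrix.mulVec_mulVec, hPQ]
    · rintro y ⟨x, hx⟩
      rw [Submodule.mem_map]
      refine ⟨M.mulVec (eQ.symm x), ⟨eQ.symm x, rfl⟩, ?_⟩
      show eP (M.mulVec (eQ.symm x)) = y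
      have hQx : Q.mulVec (eQ.symm x) = x := by
        have h1 := eQ.apply_symm_apply x
        rwa [heQ_apply] at h1
      rw [heP_apply, Matrix.mulVec_mulVec, hPQ, ← Matrix.mulVec_mulVec, hQx]
      exact hx
  set φL := Submodule.Quotient.equiv (colSpan M) (colSpan M)
    (eP : (Fin n → ℤ) ≃ₗ[ℤ] (Fin n → ℤ)) hmap with hφL
  have hφL_apply : ∀ x : Fin n → ℤ,
      φL (Submodule.Quotient.mk x) = Submodule.Quotient.mk (P.mulVec x) := fun x => by
    rw [hφL, Submodule.Quotient.equiv_apply, Submodule.mapQ_apply]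
    show Submodule.Quotient.mk (eP x) = _
    rw [heP_apply]
  -- forward adjacency preservation for any linear equiv with the column property
  have key : ∀ (g : LatticeVertex M ≃ₗ[ℤ] LatticeVertex M),
      (∀ j : Fin n, ∃ i : Fin n,
        g (Submodule.Quotient.mk (_root_.stdBasis j)) =
          Submodule.Quotient.mk (_root_.stdBasis i) ∨
        g (Submodule.Quotient.mk (_root_.stdBasis j)) =
          -Submodule.Quotient.mk (_root_.stdBasis i)) →
      ∀ v w, (latticeGraph M).Adj v w → (latticeGraph M).Adj (g v) (g w) := by
    intro g hg v w hadj
    obtain ⟨hne, i, hd⟩ := hadj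
    refine ⟨fun he => hne (g.injective he), ?_⟩
    obtain ⟨i', hi'⟩ := hg i
    rcases hd with hd | hd
    · rcases hi' with hh | hh
      · exact ⟨i', Or.inl (by rw [← map_sub, hd, hh])⟩
      · refine ⟨i', Or.inr ?_⟩
        rw [← map_sub, show w - v = -(v - w) from (neg_sub v w).symm, map_neg, hd, hh, neg_neg]
    · rcases hi' with hh | hh
      · exact ⟨i', Or.inr (by rw [← map_sub, hd, hh])⟩
      · refine ⟨i', Or.inl ?_⟩
        rw [← map_sub, show v - w = -(w - v) from (neg_sub w v).symm, map_neg, hd, hh, neg_neg]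
  have hcolφ : ∀ j : Fin n, ∃ i : Fin n,
      φL (Submodule.Quotient.mk (_root_.stdBasis j)) =
        Submodule.Quotient.mk (_root_.stdBasis i) ∨
      φL (Submodule.Quotient.mk (_root_.stdBasis j)) =
        -Submodule.Quotient.mk (_root_.stdBasis i) := by
    intro j
    obtain ⟨i, hi⟩ := signedPerm_col_exists hP j
    refine ⟨i, ?_⟩
    rcases hi with hi | hi
    · left; rw [hφL_apply, hi]
    · right; rw [hφL_apply, hi, Submodule.Quotient.mk_neg]
  have hcolφsymm : ∀ j : Fin n, ∃ i : Fin n,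
      φL.symm (Submodule.Quotient.mk (_root_.stdBasis j)) =
        Submodule.Quotient.mk (_root_.stdBasis i) ∨
      φL.symm (Submodule.Quotient.mk (_root_.stdBasis j)) =
        -Submodule.Quotient.mk (_root_.stdBasis i) := by
    intro j
    obtain ⟨i, hi⟩ := signedPerm_col_surj hP j
    refine ⟨i, ?_⟩
    rcases hi with hi | hi
    · left
      have h2 : φL (Submodule.Quotient.mk (_root_.stdBasis i)) =
          Submodule.Quotient.mk (_root_.stdBasis j) := by
        rw [hφL_apply, hi]
      rw [← h2, φL.symm_apply_apply]
    · right
      have h2 : φL (-Submodule.Quotient.mk (_root_.stdBasis i)) =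
          Submodule.Quotient.mk (_root_.stdBasis j) := by
        rw [← Submodule.Quotient.mk_neg, hφL_apply, Matrix.mulVec_neg, hi, neg_neg]
      rw [← h2, φL.symm_apply_apply]
  refine ⟨⟨φL.toEquiv, ?_⟩, hφL_apply⟩
  intro v w
  constructor
  · intro h
    have h2 := key φL.symm hcolφsymm (φL v) (φL w) h
    rwa [φL.symm_apply_apply, φL.symm_apply_apply] at h2
  · exact key φL hcolφ v w

/-- Every edge can be mapped to the canonical edge `(0, e₀)`. -/
lemma edge_reduce {M : Matrix (Fin n) (Fin n) ℤ} (hM : M.det ≠ 0)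
    (hsym : IsLinearlySymmetric M) {x₁ x₂ : LatticeVertex M}
    (h : (latticeGraph M).Adj x₁ x₂) (hn : 0 < n) :
    ∃ φ : latticeGraph M ≃g latticeGraph M, φ x₁ = 0 ∧
      φ x₂ = Submodule.Quotient.mk (_root_.stdBasis (⟨0, hn⟩ : Fin n)) := by
  obtain ⟨hne, i, hd⟩ := h
  have hd' : x₂ - x₁ = Submodule.Quotient.mk (_root_.stdBasis i) ∨
      x₂ - x₁ = -Submodule.Quotient.mk (_root_.stdBasis i) := by
    rcases hd with hd | hd
    · right; rw [← hd]; exact (neg_sub x₁ x₂).symm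
    · left; exact hd
  have step1 : ∃ φ' : latticeGraph M ≃g latticeGraph M, φ' x₁ = 0 ∧
      φ' x₂ = Submodule.Quotient.mk (_root_.stdBasis i) := by
    rcases hd' with hd' | hd'
    · refine ⟨transIso M (-x₁), ?_, ?_⟩
      · show x₁ + -x₁ = 0; exact add_neg_cancel x₁
      · show x₂ + -x₁ = _; rw [← sub_eq_add_neg, hd']
    · refine ⟨(transIso M (-x₁)).trans (negIso M), ?_, ?_⟩
      · show -(x₁ + -x₁) = 0; rw [add_neg_cancel, neg_zero]
      · show -(x₂ + -x₁) = _; rw [← sub_eq_add_neg, hd', neg_neg]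
  obtain ⟨φ', hφ1, hφ2⟩ := step1
  obtain ⟨P, hP, ⟨Q, hPQ⟩, hPe⟩ := hsym i
  obtain ⟨ψ, hψ⟩ := exists_permIso hM hP hPQ
  have hψ0 : ψ.symm 0 = 0 := by
    have h0 : ψ 0 = 0 := by
      have h1 := hψ 0
      simpa [Matrix.mulVec_zero] using h1
    have h2 := ψ.symm_apply_apply 0
    rwa [h0] at h2
  rcases hPe with hPe | hPe
  · refine ⟨φ'.trans ψ.symm, ?_, ?_⟩
    · show ψ.symm (φ' x₁) = 0; rw [hφ1, hψ0]
    · show ψ.symm (φ' x₂) = _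
      rw [hφ2]
      have h2 : ψ (Submodule.Quotient.mk (_root_.stdBasis (⟨0, hn⟩ : Fin n))) =
          Submodule.Quotient.mk (_root_.stdBasis i) := by
        rw [hψ]; exact congrArg _ hPe
      rw [← h2, ψ.symm_apply_apply]
  · refine ⟨(φ'.trans ψ.symm).trans (negIso M), ?_, ?_⟩
    · show -(ψ.symm (φ' x₁)) = 0; rw [hφ1, hψ0, neg_zero]
    · show -(ψ.symm (φ' x₂)) = _
      rw [hφ2]
      have h2 : ψ (-Submodule.Quotient.mk (_root_.stdBasis (⟨0, hn⟩ : Fin n))) =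
          Submodule.Quotient.mk (_root_.stdBasis i) := by
        rw [← Submodule.Quotient.mk_neg, hψ, Matrix.mulVec_neg, hPe, neg_neg]
      rw [← h2, ψ.symm_apply_apply, neg_neg]

end AuxProof

/-- a linearly symmetric lattice graph is symmetric, i.e. both
vertex-transitive and edge-transitive. -/
theorem linearlySymmetric_implies_symmetric {n : ℕ}
    (M : Matrix (Fin n) (Fin n) ℤ) (hM : M.det ≠ 0) (hsym : IsLinearlySymmetric M) :
    (∀ x y : LatticeVertex M, ∃ φ : latticeGraph M ≃g latticeGraph M, φ x = y) ∧
    (∀ x₁ x₂ y₁ y₂ : LatticeVertex M,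
      (latticeGraph M).Adj x₁ x₂ → (latticeGraph M).Adj y₁ y₂ →
      ∃ φ : latticeGraph M ≃g latticeGraph M,
        (φ x₁ = y₁ ∧ φ x₂ = y₂) ∨ (φ x₁ = y₂ ∧ φ x₂ = y₁)) := by
  constructor
  · intro x y
    refine ⟨transIso M (y - x), ?_⟩
    show x + (y - x) = y
    abel
  · intro x₁ x₂ y₁ y₂ h₁ h₂
    have hn : 0 < n := h₁.2.choose.pos
    obtain ⟨φ, hφ1, hφ2⟩ := edge_reduce hM hsym h₁ hn
    obtain ⟨ψ, hψ1, hψ2⟩ := edge_reduce hM hsym h₂ hn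
    refine ⟨φ.trans ψ.symm, Or.inl ⟨?_, ?_⟩⟩
    · show ψ.symm (φ x₁) = y₁
      rw [hφ1, ← hψ1, ψ.symm_apply_apply]
    · show ψ.symm (φ x₂) = y₂
      rw [hφ2, ← hψ2, ψ.symm_apply_apply]
end
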